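/- arXiv:1702.02866 — 5 statements merged into one kernel-verified Lean document; each statement's English description precedes it below -/
import Mathlib

section
/- Let λ > 0. If λ is not an integer power of 2, then the level set L(λ) = {(x,y) ∈ ℝ⁺×ℝ⁺ : δ(x,y) = λ} is empty. Moreover, for every j ∈ ℤ, L(2^j) = ⋃_{I ∈ 𝒟^j} (I_l × I_r) ∪ (I_r × I_l), where I_l and I_r denote the left and right halves of the dyadic interval I; consequently δ(x,y) = Σ_{j∈ℤ} 2^j χ_{L(2^j)}(x,y) for all x,y ∈ ℝ⁺. -/
open MeasureTheory Set Filter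

/-- The dyadic distance on ℝ⁺: the infimum of the lengths of the dyadic
intervals `[k·2^{-j}, (k+1)·2^{-j})` containing both points (and `0` on the diagonal). -/
noncomputable def dyadicDist (x y : ℝ) : ℝ :=
  if x = y then 0
  else sInf {r : ℝ | ∃ (j : ℤ) (k : ℕ), r = (2:ℝ) ^ (-j) ∧
    x ∈ Set.Ico ((k : ℝ) * (2:ℝ) ^ (-j)) (((k : ℝ) + 1) * (2:ℝ) ^ (-j)) ∧
    y ∈ Set.Ico ((k : ℝ) * (2:ℝ) ^ (-j)) (((k : ℝ) + 1) * (2:ℝ) ^ (-j))}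

/-- same dyadic interval at scale 2^i -/
def DyQ (x y : ℝ) (i : ℤ) : Prop :=
  ∃ k : ℕ, x ∈ Set.Ico ((k : ℝ) * (2:ℝ) ^ i) (((k : ℝ) + 1) * (2:ℝ) ^ i) ∧
    y ∈ Set.Ico ((k : ℝ) * (2:ℝ) ^ i) (((k : ℝ) + 1) * (2:ℝ) ^ i)

lemma two_zpow_pos (i : ℤ) : (0:ℝ) < 2 ^ i := zpow_pos (by norm_num) i

lemma two_zpow_half (i : ℤ) : (2:ℝ) ^ (i - 1) + (2:ℝ) ^ (i - 1) = 2 ^ i := by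
  have := zpow_add_one₀ (by norm_num : (2:ℝ) ≠ 0) (i - 1)
  rw [sub_add_cancel] at this
  rw [this]; ring

lemma DyQ.mono {x y : ℝ} {i i' : ℤ} (h : DyQ x y i) (hii' : i ≤ i') : DyQ x y i' := by
  obtain ⟨k, ⟨hx1, hx2⟩, hy1, hy2⟩ := h
  set n : ℕ := (i' - i).toNat with hn
  have hni : (2:ℝ) ^ i' = (2 ^ n : ℕ) * 2 ^ i := by
    push_cast
    rw [← zpow_natCast (2:ℝ) n, ← zpow_add₀ (by norm_num : (2:ℝ) ≠ 0)]
    congr 1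
    omega
  refine ⟨k / 2 ^ n, ⟨?_, ?_⟩, ?_, ?_⟩ <;> rw [hni]
  · calc ((k / 2 ^ n : ℕ) : ℝ) * ((2 ^ n : ℕ) * 2 ^ i)
        = ((k / 2 ^ n * 2 ^ n : ℕ) : ℝ) * 2 ^ i := by push_cast; ring
      _ ≤ (k : ℝ) * 2 ^ i := by
          have : (k / 2 ^ n * 2 ^ n : ℕ) ≤ k := Nat.div_mul_le_self k (2 ^ n)
          have := (Nat.cast_le (α := ℝ)).2 this
          nlinarith [two_zpow_pos i]
      _ ≤ x := hx1
  · have hk : k < (k / 2 ^ n + 1) * 2 ^ n := by have := Nat.lt_mul_div_succ k (pow_pos (by norm_num : 0 < 2) n); linarith [Nat.mul_comm (2 ^ n) (k / 2 ^ n + 1)]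
    have hk' : (k : ℝ) + 1 ≤ ((k / 2 ^ n + 1) * 2 ^ n : ℕ) := by
      have : k + 1 ≤ (k / 2 ^ n + 1) * 2 ^ n := hk
      exact_mod_cast this
    calc x < ((k:ℝ) + 1) * 2 ^ i := hx2
      _ ≤ ((k / 2 ^ n + 1) * 2 ^ n : ℕ) * 2 ^ i := by nlinarith [two_zpow_pos i]
      _ = (((k / 2 ^ n : ℕ) : ℝ) + 1) * ((2 ^ n : ℕ) * 2 ^ i) := by push_cast; ring
  · calc ((k / 2 ^ n : ℕ) : ℝ) * ((2 ^ n : ℕ) * 2 ^ i)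
        = ((k / 2 ^ n * 2 ^ n : ℕ) : ℝ) * 2 ^ i := by push_cast; ring
      _ ≤ (k : ℝ) * 2 ^ i := by
          have : (k / 2 ^ n * 2 ^ n : ℕ) ≤ k := Nat.div_mul_le_self k (2 ^ n)
          have := (Nat.cast_le (α := ℝ)).2 this
          nlinarith [two_zpow_pos i]
      _ ≤ y := hy1
  · have hk : k < (k / 2 ^ n + 1) * 2 ^ n := by have := Nat.lt_mul_div_succ k (pow_pos (by norm_num : 0 < 2) n); linarith [Nat.mul_comm (2 ^ n) (k / 2 ^ n + 1)]
    have hk' : (k : ℝ) + 1 ≤ ((k / 2 ^ n + 1) * 2 ^ n : ℕ) := by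
      have : k + 1 ≤ (k / 2 ^ n + 1) * 2 ^ n := hk
      exact_mod_cast this
    calc y < ((k:ℝ) + 1) * 2 ^ i := hy2
      _ ≤ ((k / 2 ^ n + 1) * 2 ^ n : ℕ) * 2 ^ i := by nlinarith [two_zpow_pos i]
      _ = (((k / 2 ^ n : ℕ) : ℝ) + 1) * ((2 ^ n : ℕ) * 2 ^ i) := by push_cast; ring

lemma DyQ.exists {x y : ℝ} (hx : 0 ≤ x) (hy : 0 ≤ y) : ∃ i : ℤ, DyQ x y i := by
  obtain ⟨n, hn⟩ := pow_unbounded_of_one_lt (max x y) (by norm_num : (1:ℝ) < 2)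
  refine ⟨n, 0, ⟨?_, ?_⟩, ?_, ?_⟩ <;>
    simp only [Nat.cast_zero, zero_mul, zero_add, one_mul, zpow_natCast]
  · exact hx
  · exact lt_of_le_of_lt (le_max_left x y) hn
  · exact hy
  · exact lt_of_le_of_lt (le_max_right x y) hn

lemma DyQ.abs_lt {x y : ℝ} {i : ℤ} (h : DyQ x y i) : |x - y| < 2 ^ i := by
  obtain ⟨k, ⟨hx1, hx2⟩, hy1, hy2⟩ := h
  rw [abs_sub_lt_iff]
  constructor <;> nlinarith [two_zpow_pos i]

lemma DyQ.exists_least {x y : ℝ} (hx : 0 ≤ x) (hy : 0 ≤ y) (hne : x ≠ y) :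
    ∃ J : ℤ, DyQ x y J ∧ ∀ i, DyQ x y i → J ≤ i := by
  have habs : 0 < |x - y| := abs_pos.2 (sub_ne_zero.2 hne)
  obtain ⟨n, hn⟩ := exists_pow_lt_of_lt_one habs (by norm_num : (2⁻¹:ℝ) < 1)
  have hb : ∀ i : ℤ, DyQ x y i → -(n:ℤ) ≤ i := by
    intro i hi
    have he : (2:ℝ) ^ (-(n:ℤ)) = 2⁻¹ ^ n := by
      rw [zpow_neg, ← zpow_natCast, ← inv_zpow, inv_zpow, zpow_natCast, ← inv_pow]
    have h1 : (2:ℝ) ^ (-(n:ℤ)) < 2 ^ i := by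
      rw [he]; exact hn.trans hi.abs_lt
    exact le_of_lt ((zpow_lt_zpow_iff_right₀ (by norm_num : (1:ℝ) < 2)).1 h1)
  exact Int.exists_least_of_bdd ⟨-(n:ℤ), hb⟩ (DyQ.exists hx hy)

lemma dyadicDist_spec {x y : ℝ} (hx : 0 ≤ x) (hy : 0 ≤ y) (hne : x ≠ y) :
    ∃ J : ℤ, dyadicDist x y = 2 ^ J ∧ DyQ x y J ∧ ∀ i, DyQ x y i → J ≤ i := by
  obtain ⟨J, hJ, hleast⟩ := DyQ.exists_least hx hy hne
  refine ⟨J, ?_, hJ, hleast⟩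
  rw [dyadicDist, if_neg hne]
  have hset : {r : ℝ | ∃ (j : ℤ) (k : ℕ), r = (2:ℝ) ^ (-j) ∧
      x ∈ Set.Ico ((k : ℝ) * (2:ℝ) ^ (-j)) (((k : ℝ) + 1) * (2:ℝ) ^ (-j)) ∧
      y ∈ Set.Ico ((k : ℝ) * (2:ℝ) ^ (-j)) (((k : ℝ) + 1) * (2:ℝ) ^ (-j))} =
      {r : ℝ | ∃ i : ℤ, r = (2:ℝ) ^ i ∧ DyQ x y i} := by
    ext r
    constructor
    · rintro ⟨j, k, hr, h1, h2⟩
      exact ⟨-j, hr, k, h1, h2⟩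
    · rintro ⟨i, hr, k, h1, h2⟩
      refine ⟨-i, k, ?_, ?_, ?_⟩ <;> rw [neg_neg] <;> assumption
  rw [hset]
  apply IsLeast.csInf_eq
  constructor
  · exact ⟨J, rfl, hJ⟩
  · rintro r ⟨i, rfl, hi⟩
    exact zpow_le_zpow_right₀ (by norm_num : (1:ℝ) ≤ 2) (hleast i hi)

lemma dyadicDist_self (x : ℝ) : dyadicDist x x = 0 := by rw [dyadicDist, if_pos rfl]

lemma twokone (j : ℤ) (k : ℕ) :
    ((2 * k + 1 : ℕ) : ℝ) * 2 ^ (j - 1) = (k : ℝ) * 2 ^ j + 2 ^ (j - 1) := by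
  push_cast
  linear_combination (k : ℝ) * (two_zpow_half j)

lemma level_of_halves {j : ℤ} {k : ℕ} {x y : ℝ}
    (hx : x ∈ Set.Ico ((k : ℝ) * 2 ^ j) ((k : ℝ) * 2 ^ j + 2 ^ (j - 1)))
    (hy : y ∈ Set.Ico ((k : ℝ) * 2 ^ j + 2 ^ (j - 1)) (((k : ℝ) + 1) * 2 ^ j)) :
    0 ≤ x ∧ 0 ≤ y ∧ dyadicDist x y = 2 ^ j := by
  obtain ⟨hx1, hx2⟩ := hx
  obtain ⟨hy1, hy2⟩ := hy
  have hk0 : (0:ℝ) ≤ (k : ℝ) * 2 ^ j := mul_nonneg (Nat.cast_nonneg k) (two_zpow_pos j).le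
  have hh := two_zpow_half j
  have hhp := two_zpow_pos (j - 1)
  have hx0 : 0 ≤ x := le_trans hk0 hx1
  have hy0 : 0 ≤ y := le_trans (by linarith) hy1
  have hne : x ≠ y := by intro h; rw [h] at hx2; linarith
  have hQj : DyQ x y j := ⟨k, ⟨hx1, by linarith⟩, by linarith, hy2⟩
  have hleast : ∀ i, DyQ x y i → j ≤ i := by
    intro i hi
    by_contra hlt
    push_neg at hlt
    have hQ : DyQ x y (j - 1) := hi.mono (by omega)
    obtain ⟨k', ⟨ha1, ha2⟩, hb1, hb2⟩ := hQ
    have h1 : (k' : ℝ) * 2 ^ (j - 1) < ((2 * k + 1 : ℕ) : ℝ) * 2 ^ (j - 1) := by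
      rw [twokone]; linarith
    have h2 : ((2 * k + 1 : ℕ) : ℝ) * 2 ^ (j - 1) < ((k' : ℝ) + 1) * 2 ^ (j - 1) := by
      rw [twokone]; linarith
    have h1' : k' < 2 * k + 1 := by
      have := lt_of_mul_lt_mul_right h1 hhp.le; exact_mod_cast this
    have h2' : (2 * k + 1 : ℝ) < (k' : ℝ) + 1 := by
      have := lt_of_mul_lt_mul_right h2 hhp.le; push_cast at this ⊢; linarith
    have h2'' : 2 * k + 1 < k' + 1 := by exact_mod_cast h2'
    omega
  refine ⟨hx0, hy0, ?_⟩
  obtain ⟨J, hdJ, hQJ, hleastJ⟩ := dyadicDist_spec hx0 hy0 hne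
  have : J = j := le_antisymm (hleastJ j hQj) (hleast J hQJ)
  rw [hdJ, this]

lemma dyadicDist_comm (x y : ℝ) : dyadicDist x y = dyadicDist y x := by
  by_cases h : x = y
  · rw [h]
  · rw [dyadicDist, dyadicDist, if_neg h, if_neg (Ne.symm h)]
    congr 1
    ext r
    constructor <;> rintro ⟨j, k, hr, h1, h2⟩ <;> exact ⟨j, k, hr, h2, h1⟩

lemma level_eq (j : ℤ) :
    {p : ℝ × ℝ | 0 ≤ p.1 ∧ 0 ≤ p.2 ∧ dyadicDist p.1 p.2 = (2:ℝ) ^ j} =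
      ⋃ k : ℕ,
        (Set.Ico ((k : ℝ) * (2:ℝ) ^ j) ((k : ℝ) * (2:ℝ) ^ j + (2:ℝ) ^ (j - 1)) ×ˢ
            Set.Ico ((k : ℝ) * (2:ℝ) ^ j + (2:ℝ) ^ (j - 1)) (((k : ℝ) + 1) * (2:ℝ) ^ j)) ∪
          (Set.Ico ((k : ℝ) * (2:ℝ) ^ j + (2:ℝ) ^ (j - 1)) (((k : ℝ) + 1) * (2:ℝ) ^ j) ×ˢ
            Set.Ico ((k : ℝ) * (2:ℝ) ^ j) ((k : ℝ) * (2:ℝ) ^ j + (2:ℝ) ^ (j - 1))) := by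
  ext ⟨x, y⟩
  simp only [Set.mem_setOf_eq, Set.mem_iUnion, Set.mem_union, Set.mem_prod]
  constructor
  · rintro ⟨hx0, hy0, hd⟩
    have hne : x ≠ y := by
      intro h; rw [h, dyadicDist_self] at hd; exact (two_zpow_pos j).ne hd
    obtain ⟨J, hdJ, hQJ, hleastJ⟩ := dyadicDist_spec hx0 hy0 hne
    have hJj : J = j :=
      zpow_right_injective₀ (by norm_num : (0:ℝ) < 2) (by norm_num) (hdJ.symm.trans hd)
    subst hJj
    obtain ⟨k, ⟨hx1, hx2⟩, hy1, hy2⟩ := hQJ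
    have hh := two_zpow_half J
    refine ⟨k, ?_⟩
    by_cases hxb : x < (k : ℝ) * 2 ^ J + 2 ^ (J - 1) <;>
      by_cases hyb : y < (k : ℝ) * 2 ^ J + 2 ^ (J - 1)
    · exfalso
      have e1 : ((2*k : ℕ):ℝ) * 2^(J-1) = (k:ℝ)*2^J := by
        push_cast; linear_combination (k:ℝ) * hh
      have e2 : (((2*k : ℕ):ℝ) + 1) * 2^(J-1) = (k:ℝ)*2^J + 2^(J-1) := by
        push_cast; linear_combination (k:ℝ) * hh
      have hQ : DyQ x y (J - 1) :=
        ⟨2 * k, ⟨by rw [e1]; exact hx1, by rw [e2]; exact hxb⟩,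
          by rw [e1]; exact hy1, by rw [e2]; exact hyb⟩
      have := hleastJ _ hQ
      omega
    · exact Or.inl ⟨⟨hx1, hxb⟩, not_lt.1 hyb, hy2⟩
    · exact Or.inr ⟨⟨not_lt.1 hxb, hx2⟩, hy1, hyb⟩
    · exfalso
      push_neg at hxb hyb
      have e3 : ((2*k+1 : ℕ):ℝ) * 2^(J-1) = (k:ℝ)*2^J + 2^(J-1) := twokone J k
      have e4 : (((2*k+1 : ℕ):ℝ) + 1) * 2^(J-1) = ((k:ℝ)+1)*2^J := by
        push_cast; linear_combination ((k:ℝ)+1) * hh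
      have hQ : DyQ x y (J - 1) :=
        ⟨2 * k + 1, ⟨by rw [e3]; exact hxb, by rw [e4]; exact hx2⟩,
          by rw [e3]; exact hyb, by rw [e4]; exact hy2⟩
      have := hleastJ _ hQ
      omega
  · rintro ⟨k, h | h⟩
    · exact level_of_halves h.1 h.2
    · obtain ⟨h1, h2, h3⟩ := level_of_halves h.2 h.1
      exact ⟨h2, h1, by rw [dyadicDist_comm]; exact h3⟩

/-- Lemma 1 (a): the level sets of the dyadic distance. A level set `L(λ)` is empty
unless `λ` is an integer power of `2`; the level set at value `2^j` is the union, over the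
dyadic intervals `I` of length `2^j`, of `(I_l × I_r) ∪ (I_r × I_l)` where `I_l, I_r` are the
halves of `I`; and `δ(x,y) = Σ_{j∈ℤ} 2^j χ_{L(2^j)}(x,y)`. -/
theorem dyadic_level_sets :
    (∀ lam : ℝ, 0 < lam → (∀ j : ℤ, lam ≠ (2:ℝ) ^ j) →
      {p : ℝ × ℝ | 0 ≤ p.1 ∧ 0 ≤ p.2 ∧ dyadicDist p.1 p.2 = lam} = ∅) ∧
    (∀ j : ℤ,
      {p : ℝ × ℝ | 0 ≤ p.1 ∧ 0 ≤ p.2 ∧ dyadicDist p.1 p.2 = (2:ℝ) ^ j} =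
        ⋃ k : ℕ,
          (Set.Ico ((k : ℝ) * (2:ℝ) ^ j) ((k : ℝ) * (2:ℝ) ^ j + (2:ℝ) ^ (j - 1)) ×ˢ
              Set.Ico ((k : ℝ) * (2:ℝ) ^ j + (2:ℝ) ^ (j - 1)) (((k : ℝ) + 1) * (2:ℝ) ^ j)) ∪
            (Set.Ico ((k : ℝ) * (2:ℝ) ^ j + (2:ℝ) ^ (j - 1)) (((k : ℝ) + 1) * (2:ℝ) ^ j) ×ˢ
              Set.Ico ((k : ℝ) * (2:ℝ) ^ j) ((k : ℝ) * (2:ℝ) ^ j + (2:ℝ) ^ (j - 1)))) ∧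
    (∀ x y : ℝ, 0 ≤ x → 0 ≤ y →
      dyadicDist x y =
        ∑' j : ℤ, Set.indicator {p : ℝ × ℝ | dyadicDist p.1 p.2 = (2:ℝ) ^ j}
          (fun _ => (2:ℝ) ^ j) (x, y)) := by
  refine ⟨?_, level_eq, ?_⟩
  · intro lam hlam hpow
    rw [Set.eq_empty_iff_forall_notMem]
    rintro ⟨x, y⟩ ⟨hx, hy, hd⟩
    by_cases h : x = y
    · rw [h, dyadicDist_self] at hd
      exact hlam.ne hd
    · obtain ⟨J, hdJ, -, -⟩ := dyadicDist_spec hx hy h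
      exact hpow J (hd ▸ hdJ ▸ rfl : lam = 2 ^ J)
  · intro x y hx hy
    by_cases h : x = y
    · rw [h, dyadicDist_self]
      symm
      have hz : ∀ j : ℤ, Set.indicator {p : ℝ × ℝ | dyadicDist p.1 p.2 = (2:ℝ) ^ j}
          (fun _ => (2:ℝ) ^ j) (y, y) = 0 := by
        intro j
        apply Set.indicator_of_notMem
        simp only [Set.mem_setOf_eq]
        rw [dyadicDist_self]
        exact (two_zpow_pos j).ne
      rw [tsum_congr hz, tsum_zero]
    · obtain ⟨J, hdJ, -, -⟩ := dyadicDist_spec hx hy h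
      rw [hdJ]
      symm
      rw [tsum_eq_single J]
      · apply Set.indicator_of_mem
        exact hdJ
      · intro j hj
        apply Set.indicator_of_notMem
        simp only [Set.mem_setOf_eq]
        rw [hdJ]
        exact fun hh => hj (zpow_right_injective₀ (by norm_num : (0:ℝ) < 2) (by norm_num) hh.symm)
end

section
/- For every α > −1, every x ∈ ℝ⁺ and every r > 0, with c(α) = 2^{-1}(1 − 2^{-(1+α)})^{-1}, one has c(α)·2^{-(1+α)}·r^{1+α} ≤ ∫_{B_δ(x,r)} δ(x,y)^α dy ≤ c(α)·r^{1+α}. -/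
open MeasureTheory Set Filter

namespace DyadicAux

lemma zpow2_pos (j : ℤ) : (0:ℝ) < 2 ^ j := zpow_pos (by norm_num) j

noncomputable def dI (x : ℝ) (j : ℤ) : Set ℝ :=
  Set.Ico ((⌊x * 2^j⌋₊ : ℝ) * 2^(-j)) (((⌊x * 2^j⌋₊ : ℝ) + 1) * 2^(-j))

lemma mem_Ico_iff {z : ℝ} (hz : 0 ≤ z) (j : ℤ) (k : ℕ) :
    z ∈ Set.Ico ((k:ℝ) * (2:ℝ)^(-j)) (((k:ℝ)+1) * (2:ℝ)^(-j)) ↔ ⌊z * 2^j⌋₊ = k := by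
  have h : (0:ℝ) < (2:ℝ)^j := zpow2_pos j
  have key : ∀ a : ℝ, a * (2:ℝ)^(-j) * 2^j = a := by
    intro a
    rw [zpow_neg, mul_assoc, inv_mul_cancel₀ h.ne', mul_one]
  rw [Set.mem_Ico, Nat.floor_eq_iff (by positivity)]
  constructor
  · rintro ⟨h1, h2⟩
    constructor
    · have := mul_le_mul_of_nonneg_right h1 h.le
      rwa [key] at this
    · have := mul_lt_mul_of_pos_right h2 h
      rwa [key] at this
  · rintro ⟨h1, h2⟩
    have hp : (0:ℝ) < (2:ℝ)^(-j) := zpow2_pos (-j)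
    constructor
    · have := mul_le_mul_of_nonneg_right h1 hp.le
      rwa [mul_assoc, ← zpow_add₀ (two_ne_zero), add_neg_cancel,
        zpow_zero, mul_one] at this
    · have := mul_lt_mul_of_pos_right h2 hp
      rwa [mul_assoc, ← zpow_add₀ (two_ne_zero), add_neg_cancel,
        zpow_zero, mul_one] at this

lemma mem_dI {x z : ℝ} (hz : 0 ≤ z) (j : ℤ) :
    z ∈ dI x j ↔ ⌊z * 2^j⌋₊ = ⌊x * 2^j⌋₊ := mem_Ico_iff hz j _

lemma self_mem_dI {x : ℝ} (hx : 0 ≤ x) (j : ℤ) : x ∈ dI x j := (mem_dI hx j).2 rfl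

lemma dI_nonneg {x z : ℝ} {j : ℤ} (h : z ∈ dI x j) : 0 ≤ z :=
  le_trans (by positivity) h.1

lemma floor_step {x z : ℝ} {j j' : ℤ} (hjj : j ≤ j')
    (h : ⌊z * 2^j'⌋₊ = ⌊x * 2^j'⌋₊) : ⌊z * 2^j⌋₊ = ⌊x * 2^j⌋₊ := by
  set m := (j' - j).toNat with hm
  have hm' : (j' : ℤ) = j + m := by
    rw [hm, Int.toNat_of_nonneg (by omega)]; ring
  have key : ∀ w : ℝ, w * 2^j = (w * 2^j') / ((2^m : ℕ) : ℝ) := by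
    intro w
    rw [hm']
    push_cast
    rw [zpow_add₀ (two_ne_zero), ← zpow_natCast (2:ℝ) m]
    field_simp
  rw [key z, key x, Nat.floor_div_natCast, Nat.floor_div_natCast, h]

lemma dI_antitone {x : ℝ} {j j' : ℤ} (hjj : j ≤ j') : dI x j' ⊆ dI x j := by
  intro z hz
  have hz0 : 0 ≤ z := dI_nonneg hz
  exact (mem_dI hz0 j).2 (floor_step hjj ((mem_dI hz0 j').1 hz))

lemma volume_dI (x : ℝ) (j : ℤ) : volume (dI x j) = ENNReal.ofReal ((2:ℝ)^(-j)) := by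
  rw [dI, Real.volume_Ico]
  congr 1
  ring

lemma dyadicDist_nonneg (x y : ℝ) : 0 ≤ dyadicDist x y := by
  unfold dyadicDist
  split
  · exact le_refl 0
  · exact Real.sInf_nonneg (by rintro r ⟨j, k, rfl, -⟩; positivity)

lemma dyadicDist_self (x : ℝ) : dyadicDist x x = 0 := by simp [dyadicDist]

lemma dyadicDist_of_neg {x y : ℝ} (hx : 0 ≤ x) (hy : y < 0) : dyadicDist x y = 0 := by
  have hxy : x ≠ y := by intro h; rw [h] at hx; linarith
  unfold dyadicDist
  rw [if_neg hxy]
  convert Real.sInf_empty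
  rw [Set.eq_empty_iff_forall_notMem]
  rintro r ⟨j, k, rfl, -, hym, -⟩
  have : (0:ℝ) ≤ (k:ℝ) * (2:ℝ)^(-j) := by positivity
  linarith [hym]

lemma dyadicDist_spec {x y : ℝ} (hx : 0 ≤ x) (hy : 0 ≤ y) (hxy : x ≠ y) :
    ∃ J : ℤ, dyadicDist x y = 2^(-J) ∧ ∀ j : ℤ, ⌊y * 2^j⌋₊ = ⌊x * 2^j⌋₊ ↔ j ≤ J := by
  set S : Set ℤ := {j : ℤ | ⌊y * 2^j⌋₊ = ⌊x * 2^j⌋₊} with hS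
  -- S nonempty
  obtain ⟨n, hn⟩ := pow_unbounded_of_one_lt (max x y) (one_lt_two (α := ℝ))
  have hne : S.Nonempty := by
    refine ⟨-(n:ℤ), ?_⟩
    have h2n : (0:ℝ) < 2^n := by positivity
    have e : (2:ℝ)^(-(-(n:ℤ))) = 2^n := by
      rw [neg_neg, zpow_natCast]
    have hz : ∀ w : ℝ, 0 ≤ w → w ≤ max x y → ⌊w * 2^(-(n:ℤ))⌋₊ = 0 := by
      intro w hw0 hwm
      apply Nat.floor_eq_zero.2
      rw [zpow_neg, zpow_natCast]
      calc w * ((2:ℝ)^n)⁻¹ < 2^n * ((2:ℝ)^n)⁻¹ := by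
            apply mul_lt_mul_of_pos_right _ (by positivity)
            exact lt_of_le_of_lt hwm hn
        _ = 1 := mul_inv_cancel₀ h2n.ne'
    rw [hS, Set.mem_setOf_eq, hz y hy le_sup_right, hz x hx le_sup_left]
  -- S bounded above
  have hd0 : 0 < |x - y| := abs_pos.2 (sub_ne_zero.2 hxy)
  obtain ⟨N, hN⟩ := pow_unbounded_of_one_lt |x - y|⁻¹ (one_lt_two (α := ℝ))
  have hb : BddAbove S := by
    refine ⟨(N:ℤ), ?_⟩
    rintro j hj
    have hxm := (mem_Ico_iff hx j ⌊x * 2^j⌋₊).2 rfl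
    have hym := (mem_Ico_iff hy j ⌊x * 2^j⌋₊).2 hj
    have e : ((⌊x * 2^j⌋₊:ℝ)+1) * (2:ℝ)^(-j) = (⌊x * 2^j⌋₊:ℝ) * (2:ℝ)^(-j) + (2:ℝ)^(-j) := by
      ring
    have habs : |x - y| < (2:ℝ)^(-j) := by
      rw [abs_sub_lt_iff]
      obtain ⟨hx1, hx2⟩ := hxm
      obtain ⟨hy1, hy2⟩ := hym
      exact ⟨by linarith, by linarith⟩
    have h2 : (2:ℝ)^(-(N:ℤ)) < (2:ℝ)^(-j) := by
      calc (2:ℝ)^(-(N:ℤ)) < |x - y| := by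
            rw [zpow_neg, zpow_natCast]
            rw [inv_lt_comm₀ (by positivity) hd0]
            exact hN
        _ < (2:ℝ)^(-j) := habs
    have := (zpow_lt_zpow_iff_right₀ (one_lt_two (α := ℝ))).1 h2
    omega
  set J := sSup S with hJdef
  have hJS : J ∈ S := Int.csSup_mem hne hb
  have hiff : ∀ j : ℤ, ⌊y * 2^j⌋₊ = ⌊x * 2^j⌋₊ ↔ j ≤ J := by
    intro j
    constructor
    · intro hj; exact le_csSup hb hj
    · intro hj; exact floor_step hj hJS
  refine ⟨J, ?_, hiff⟩
  -- distance value
  set T := {r : ℝ | ∃ (j : ℤ) (k : ℕ), r = (2:ℝ) ^ (-j) ∧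
    x ∈ Set.Ico ((k : ℝ) * (2:ℝ) ^ (-j)) (((k : ℝ) + 1) * (2:ℝ) ^ (-j)) ∧
    y ∈ Set.Ico ((k : ℝ) * (2:ℝ) ^ (-j)) (((k : ℝ) + 1) * (2:ℝ) ^ (-j))} with hT
  have hmemT : (2:ℝ)^(-J) ∈ T := by
    refine ⟨J, ⌊x * 2^J⌋₊, rfl, (mem_Ico_iff hx J _).2 rfl, (mem_Ico_iff hy J _).2 hJS⟩
  have hlb : ∀ r ∈ T, (2:ℝ)^(-J) ≤ r := by
    rintro r ⟨j, k, rfl, hxm, hym⟩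
    have hj : j ∈ S := by
      rw [hS, Set.mem_setOf_eq, (mem_Ico_iff hy j k).1 hym, (mem_Ico_iff hx j k).1 hxm]
    have hjJ : j ≤ J := le_csSup hb hj
    exact zpow_le_zpow_right₀ (one_le_two (α := ℝ)) (by omega)
  have : dyadicDist x y = sInf T := by rw [dyadicDist, if_neg hxy]
  rw [this]
  exact le_antisymm (csInf_le ⟨_, hlb⟩ hmemT) (le_csInf ⟨_, hmemT⟩ hlb)



lemma exists_ball_eq {x : ℝ} (hx : 0 ≤ x) {r : ℝ} (hr : 0 < r) :
    ∃ J0 : ℤ, (2:ℝ)^(-J0) < r ∧ r ≤ 2 * (2:ℝ)^(-J0) ∧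
      {y : ℝ | 0 ≤ y ∧ dyadicDist x y < r} = dI x J0 := by
  obtain ⟨M, hM⟩ := pow_unbounded_of_one_lt r⁻¹ (one_lt_two (α := ℝ))
  obtain ⟨N, hN⟩ := pow_unbounded_of_one_lt r (one_lt_two (α := ℝ))
  have Hinh : ∃ z : ℤ, (2:ℝ)^(-z) < r := by
    refine ⟨(M:ℤ), ?_⟩
    rw [zpow_neg, zpow_natCast, inv_lt_comm₀ (by positivity) hr]
    exact hM
  have Hbdd : ∃ b : ℤ, ∀ z : ℤ, (2:ℝ)^(-z) < r → b ≤ z := by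
    refine ⟨-(N:ℤ), ?_⟩
    intro z hz
    have : (2:ℝ)^(-z) < (2:ℝ)^(N:ℤ) := by
      rw [zpow_natCast]; exact hz.trans hN
    have := (zpow_lt_zpow_iff_right₀ (one_lt_two (α := ℝ))).1 this
    omega
  obtain ⟨J0, hP, hmin⟩ := Int.exists_least_of_bdd Hbdd Hinh
  refine ⟨J0, hP, ?_, ?_⟩
  · by_contra hcon
    push_neg at hcon
    have : (2:ℝ)^(-(J0-1)) < r := by
      have e : (2:ℝ)^(-(J0-1)) = 2 * (2:ℝ)^(-J0) := by
        rw [show -(J0-1) = -J0 + 1 by ring, zpow_add₀ (two_ne_zero), zpow_one]; ring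
      rw [e]; exact hcon
    have := hmin _ this
    omega
  · ext y
    simp only [Set.mem_setOf_eq]
    constructor
    · rintro ⟨hy0, hlt⟩
      by_cases hxy : x = y
      · rw [← hxy]; exact self_mem_dI hx J0
      · obtain ⟨J, hd, hiff⟩ := dyadicDist_spec hx hy0 hxy
        rw [hd] at hlt
        have hJ0J : J0 ≤ J := hmin J hlt
        exact (mem_dI hy0 J0).2 ((hiff J0).2 hJ0J)
    · intro hyd
      have hy0 : 0 ≤ y := dI_nonneg hyd
      refine ⟨hy0, ?_⟩
      by_cases hxy : x = y
      · rw [hxy] at *; rw [dyadicDist_self]; exact hr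
      · obtain ⟨J, hd, hiff⟩ := dyadicDist_spec hx hy0 hxy
        have hJ0J : J0 ≤ J := (hiff J0).1 ((mem_dI hy0 J0).1 hyd)
        rw [hd]
        calc (2:ℝ)^(-J) ≤ (2:ℝ)^(-J0) :=
              zpow_le_zpow_right₀ (one_le_two (α := ℝ)) (by omega)
          _ < r := hP

lemma dist_eq_of_mem_diff {x y : ℝ} (hx : 0 ≤ x) {j : ℤ}
    (h1 : y ∈ dI x j) (h2 : y ∉ dI x (j+1)) : dyadicDist x y = 2^(-j) := by
  have hy0 : 0 ≤ y := dI_nonneg h1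
  have hxy : x ≠ y := by rintro rfl; exact h2 (self_mem_dI hx _)
  obtain ⟨J, hd, hiff⟩ := dyadicDist_spec hx hy0 hxy
  have hjJ : j ≤ J := (hiff j).1 ((mem_dI hy0 j).1 h1)
  have hj1 : ¬(j + 1 ≤ J) := fun h => h2 ((mem_dI hy0 _).2 ((hiff _).2 h))
  have : J = j := by omega
  rw [hd, this]

lemma measurable_dyadicDist {x : ℝ} (hx : 0 ≤ x) : Measurable (dyadicDist x) := by
  apply measurable_of_Iio
  intro t
  by_cases ht : 0 < t
  · obtain ⟨J0, h1, h2, hball⟩ := exists_ball_eq hx ht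
    have : dyadicDist x ⁻¹' Set.Iio t = Set.Iio 0 ∪ dI x J0 := by
      ext y
      simp only [Set.mem_preimage, Set.mem_Iio, Set.mem_union]
      constructor
      · intro h
        by_cases hy0 : 0 ≤ y
        · right
          have : y ∈ {y : ℝ | 0 ≤ y ∧ dyadicDist x y < t} := ⟨hy0, h⟩
          rwa [hball] at this
        · left; linarith
      · rintro (hy | hy)
        · rw [dyadicDist_of_neg hx hy]; exact ht
        · have : y ∈ {y : ℝ | 0 ≤ y ∧ dyadicDist x y < t} := by rw [hball]; exact hy
          exact this.2
    rw [this]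
    exact measurableSet_Iio.union measurableSet_Ico
  · have : dyadicDist x ⁻¹' Set.Iio t = ∅ := by
      rw [Set.eq_empty_iff_forall_notMem]
      intro y hy
      simp only [Set.mem_preimage, Set.mem_Iio] at hy
      have := dyadicDist_nonneg x y
      push_neg at ht
      linarith
    rw [this]
    exact MeasurableSet.empty

end DyadicAux

/-- Lemma 1 (b-i): for `α > -1`, with `c(α) = 2⁻¹(1 - 2^{-(1+α)})⁻¹`,
`c(α)·2^{-(1+α)}·r^{1+α} ≤ ∫_{B_δ(x,r)} δ(x,y)^α dy ≤ c(α)·r^{1+α}`. -/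
theorem integral_dyadicDist_rpow_ball (α : ℝ) (hα : -1 < α) (x : ℝ) (hx : 0 ≤ x)
    (r : ℝ) (hr : 0 < r) :
    (2:ℝ)⁻¹ * (1 - (2:ℝ) ^ (-(1 + α)))⁻¹ * (2:ℝ) ^ (-(1 + α)) * r ^ (1 + α) ≤
        ∫ y in {y : ℝ | 0 ≤ y ∧ dyadicDist x y < r}, dyadicDist x y ^ α ∧
      (∫ y in {y : ℝ | 0 ≤ y ∧ dyadicDist x y < r}, dyadicDist x y ^ α) ≤
        (2:ℝ)⁻¹ * (1 - (2:ℝ) ^ (-(1 + α)))⁻¹ * r ^ (1 + α) := by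
  obtain ⟨J0, hsr, hrs, hball⟩ := DyadicAux.exists_ball_eq hx hr
  set s : ℝ := (2:ℝ)^(-J0) with hsdef
  have hs0 : 0 < s := DyadicAux.zpow2_pos _
  have h1α : 0 < 1 + α := by linarith
  set q : ℝ := (2:ℝ)^(-(1+α)) with hqdef
  have hq0 : 0 < q := Real.rpow_pos_of_pos two_pos _
  have hq1 : q < 1 := Real.rpow_lt_one_of_one_lt_of_neg one_lt_two (by linarith)
  set A : ℕ → Set ℝ := fun n => DyadicAux.dI x (J0 + n) \ DyadicAux.dI x (J0 + n + 1) with hA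
  have hAmeas : ∀ n, MeasurableSet (A n) := fun n => measurableSet_Ico.diff measurableSet_Ico
  have hAdisj : Pairwise (Function.onFun Disjoint A) := by
    apply (pairwise_disjoint_on A).2
    intro m n hmn
    apply Set.disjoint_left.2
    intro z hzm hzn
    exact hzm.2 (DyadicAux.dI_antitone (by omega) hzn.1)
  have hUnion : (⋃ n, A n) = DyadicAux.dI x J0 \ {x} := by
    ext y
    simp only [Set.mem_iUnion, Set.mem_diff, Set.mem_singleton_iff]
    constructor
    · rintro ⟨n, hyn⟩
      refine ⟨DyadicAux.dI_antitone (by omega) hyn.1, ?_⟩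
      rintro rfl
      exact hyn.2 (DyadicAux.self_mem_dI hx _)
    · rintro ⟨hyJ0, hyx⟩
      have hy0 : 0 ≤ y := DyadicAux.dI_nonneg hyJ0
      have hxy : x ≠ y := fun h => hyx h.symm
      obtain ⟨J, hd, hiff⟩ := DyadicAux.dyadicDist_spec hx hy0 hxy
      have hJ0J : J0 ≤ J := (hiff J0).1 ((DyadicAux.mem_dI hy0 J0).1 hyJ0)
      refine ⟨(J - J0).toNat, ?_, ?_⟩
      · have e : J0 + ((J - J0).toNat : ℤ) = J := by omega
        rw [e]
        exact (DyadicAux.mem_dI hy0 J).2 ((hiff J).2 le_rfl)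
      · intro hcon
        have := (hiff _).1 ((DyadicAux.mem_dI hy0 _).1 hcon)
        omega
  have hdistval : ∀ n : ℕ, ∀ y ∈ A n, dyadicDist x y = (2:ℝ)^(-(J0 + (n:ℤ))) :=
    fun n y hy => DyadicAux.dist_eq_of_mem_diff hx hy.1 hy.2
  have hvolA : ∀ n : ℕ, volume (A n) = ENNReal.ofReal ((2:ℝ)^(-(J0+(n:ℤ))-1)) := by
    intro n
    rw [hA]
    simp only []
    rw [measure_diff (DyadicAux.dI_antitone (by omega)) measurableSet_Ico.nullMeasurableSet
      (by rw [DyadicAux.volume_dI]; exact ENNReal.ofReal_ne_top)]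
    rw [DyadicAux.volume_dI, DyadicAux.volume_dI, ← ENNReal.ofReal_sub _ (by positivity)]
    congr 1
    have e1 : -(J0+(n:ℤ)+1) = (-(J0+(n:ℤ))-1) := by ring
    have e2 : (2:ℝ)^(-(J0+(n:ℤ))) = 2 * (2:ℝ)^(-(J0+(n:ℤ))-1) := by
      rw [show -(J0+(n:ℤ)) = (-(J0+(n:ℤ))-1)+1 by ring, zpow_add₀ (two_ne_zero), zpow_one]
      ring
    rw [e1, e2]
    ring
  have hmeasf : Measurable (fun y => dyadicDist x y ^ α) := by
    have := DyadicAux.measurable_dyadicDist hx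
    fun_prop
  have hnonnegf : ∀ y, (0:ℝ) ≤ dyadicDist x y ^ α :=
    fun y => Real.rpow_nonneg (DyadicAux.dyadicDist_nonneg x y) α
  have hae : (DyadicAux.dI x J0 : Set ℝ) =ᵐ[volume] (⋃ n, A n) := by
    rw [hUnion]
    symm
    apply MeasureTheory.diff_ae_eq_self.2
    refine le_antisymm ?_ zero_le
    calc volume (DyadicAux.dI x J0 ∩ {x}) ≤ volume ({x} : Set ℝ) :=
          measure_mono Set.inter_subset_right
      _ = 0 := Real.volume_singleton
  have hterm : ∀ n : ℕ, ∫⁻ y in A n, ENNReal.ofReal (dyadicDist x y ^ α) =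
      ENNReal.ofReal (((2:ℝ)^(-(J0+(n:ℤ))))^α * (2:ℝ)^(-(J0+(n:ℤ))-1)) := by
    intro n
    rw [setLIntegral_congr_fun (hAmeas n)
      (fun y hy => by rw [hdistval n y hy])]
    rw [setLIntegral_const, hvolA n, ← ENNReal.ofReal_mul (by positivity)]
  have ht : ∀ n : ℕ, ((2:ℝ)^(-(J0+(n:ℤ))))^α * (2:ℝ)^(-(J0+(n:ℤ))-1)
      = (2⁻¹ * s^(1+α)) * q^n := by
    intro n
    have h2 : (0:ℝ) < 2 := two_pos
    rw [hsdef, hqdef]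
    rw [← Real.rpow_intCast 2 (-(J0+(n:ℤ))), ← Real.rpow_intCast 2 (-(J0+(n:ℤ))-1),
      ← Real.rpow_intCast 2 (-J0)]
    rw [← Real.rpow_natCast ((2:ℝ)^(-(1+α) : ℝ)) n]
    rw [← Real.rpow_mul h2.le, ← Real.rpow_mul h2.le, ← Real.rpow_mul h2.le]
    rw [show (2:ℝ)⁻¹ = (2:ℝ)^(-1 : ℝ) from (Real.rpow_neg_one 2).symm]
    rw [← Real.rpow_add h2, ← Real.rpow_add h2, ← Real.rpow_add h2]
    congr 1
    push_cast
    ring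
  have hsummable : Summable (fun n : ℕ => (2⁻¹ * s^(1+α)) * q^n) :=
    (summable_geometric_of_lt_one hq0.le hq1).mul_left _
  have htsum : ∑' n : ℕ, (2⁻¹ * s^(1+α)) * q^n = (2⁻¹ * s^(1+α)) * (1-q)⁻¹ := by
    rw [tsum_mul_left, tsum_geometric_of_lt_one hq0.le hq1]
  have hq1' : 0 < 1 - q := by linarith
  have hIval : (∫ y in {y : ℝ | 0 ≤ y ∧ dyadicDist x y < r}, dyadicDist x y ^ α)
      = (2⁻¹ * s^(1+α)) * (1-q)⁻¹ := by
    rw [hball, setIntegral_congr_set hae]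
    rw [integral_eq_lintegral_of_nonneg_ae (Filter.Eventually.of_forall hnonnegf)
      hmeasf.aestronglyMeasurable]
    rw [lintegral_iUnion hAmeas hAdisj]
    have : ∑' n : ℕ, ∫⁻ y in A n, ENNReal.ofReal (dyadicDist x y ^ α)
        = ∑' n : ℕ, ENNReal.ofReal ((2⁻¹ * s^(1+α)) * q^n) := by
      refine tsum_congr fun n => ?_
      rw [hterm n, ht n]
    rw [this, ← ENNReal.ofReal_tsum_of_nonneg (fun n => by positivity) hsummable, htsum,
      ENNReal.toReal_ofReal (by positivity)]
  rw [hIval]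
  have hCpos : (0:ℝ) < 2⁻¹ * (1 - q)⁻¹ := by positivity
  have hrw : (2⁻¹ * s^(1+α)) * (1-q)⁻¹ = (2⁻¹ * (1-q)⁻¹) * s^(1+α) := by ring
  rw [hrw]
  constructor
  · have hq_r : q * r^(1+α) = (r/2)^(1+α) := by
      rw [Real.div_rpow hr.le two_pos.le, hqdef, Real.rpow_neg two_pos.le]
      ring
    have hle : (r/2)^(1+α) ≤ s^(1+α) :=
      Real.rpow_le_rpow (by positivity) (by linarith) h1α.le
    calc (2:ℝ)⁻¹ * (1 - q)⁻¹ * q * r ^ (1 + α)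
        = (2⁻¹ * (1-q)⁻¹) * (q * r^(1+α)) := by ring
      _ ≤ (2⁻¹ * (1-q)⁻¹) * s^(1+α) := by
          apply mul_le_mul_of_nonneg_left _ hCpos.le
          rw [hq_r]; exact hle
  · apply mul_le_mul_of_nonneg_left _ hCpos.le
    exact Real.rpow_le_rpow hs0.le hsr.le h1α.le
end

section
/- Let K ∈ 𝒦 with level values k_j, α_l = 2^{-l}(k_{-l} − k_{-l+1}), and Λ_j = Σ_{l>j} α_l for j ∈ ℤ. Then sup_{j∈ℤ} Λ_j = 1 and inf_{j∈ℤ} Λ_j ≥ −1. -/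
open MeasureTheory Set Filter

/-- The sequence `α_l = 2^{-l}(k_{-l} - k_{-l+1})` associated to the level values `k` of a
kernel in `𝒦`. -/
noncomputable def alphaOf (k : ℤ → ℝ) (l : ℤ) : ℝ :=
  (2:ℝ) ^ (-l) * (k (-l) - k (-l + 1))

/-- The profile `φ(s) = Σ_{l∈ℤ} α_l 2^l χ_{(0,2^{-l}]}(s)` associated to the level values `k`. -/
noncomputable def phiOf (k : ℤ → ℝ) (s : ℝ) : ℝ :=
  ∑' l : ℤ, alphaOf k l * ((2:ℝ) ^ l * (if s ∈ Set.Ioc (0:ℝ) ((2:ℝ) ^ (-l)) then 1 else 0))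

/-- The sequence `Λ_j = Σ_{l>j} α_l` associated to the level values `k`. -/
noncomputable def LambdaOf (k : ℤ → ℝ) (j : ℤ) : ℝ :=
  ∑' m : ℕ, alphaOf k (j + 1 + m)

/-- The Haar function `h^j_k(x) = 2^{j/2}(χ_{[0,1/2)} - χ_{[1/2,1)})(2^j x - k)`,
supported in the dyadic interval `I^j_k = [k·2^{-j},(k+1)·2^{-j})`. -/
noncomputable def haarFn (j : ℤ) (k : ℕ) (x : ℝ) : ℝ :=
  (2:ℝ) ^ ((j : ℝ) / 2) *
    (if (2:ℝ) ^ j * x - (k : ℝ) ∈ Set.Ico (0:ℝ) (1/2) then 1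
     else if (2:ℝ) ^ j * x - (k : ℝ) ∈ Set.Ico (1/2 : ℝ) 1 then -1 else 0)

/-! ### Auxiliary dyadic-interval machinery -/

/-- Index of the dyadic interval of length `2^j` containing `x`. -/
noncomputable def dc (x : ℝ) (j : ℤ) : ℕ := (⌊x / (2:ℝ)^j⌋).toNat

/-- The dyadic interval of length `2^j` containing `x`. -/
noncomputable def dI (x : ℝ) (j : ℤ) : Set ℝ :=
  Set.Ico ((dc x j : ℝ) * (2:ℝ)^j) (((dc x j : ℝ)+1) * (2:ℝ)^j)

lemma dc_cast {x : ℝ} (hx : 0 ≤ x) (j : ℤ) : ((dc x j : ℕ) : ℝ) = (⌊x / (2:ℝ)^j⌋ : ℤ) := by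
  have h0 : (0:ℤ) ≤ ⌊x / (2:ℝ)^j⌋ := Int.floor_nonneg.2 (div_nonneg hx (by positivity))
  rw [dc]
  exact_mod_cast congrArg (Int.cast : ℤ → ℝ) (Int.toNat_of_nonneg h0)

lemma mem_dI {x : ℝ} (hx : 0 ≤ x) (j : ℤ) : x ∈ dI x j := by
  have hp : (0:ℝ) < (2:ℝ)^j := by positivity
  constructor
  · rw [dc_cast hx]
    calc (⌊x / (2:ℝ)^j⌋ : ℝ) * (2:ℝ)^j ≤ (x / (2:ℝ)^j) * (2:ℝ)^j := by
          exact mul_le_mul_of_nonneg_right (Int.floor_le _) hp.le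
      _ = x := by field_simp
  · rw [dc_cast hx]
    have := Int.lt_floor_add_one (x / (2:ℝ)^j)
    calc x = (x / (2:ℝ)^j) * (2:ℝ)^j := by field_simp
      _ < ((⌊x / (2:ℝ)^j⌋ : ℝ) + 1) * (2:ℝ)^j := by
          exact mul_lt_mul_of_pos_right this hp

lemma dI_unique {x : ℝ} (hx : 0 ≤ x) (j : ℤ) (n : ℕ)
    (h : x ∈ Set.Ico ((n:ℝ) * (2:ℝ)^j) (((n:ℝ)+1) * (2:ℝ)^j)) : n = dc x j := by
  have hp : (0:ℝ) < (2:ℝ)^j := by positivity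
  have h1 : (n:ℝ) ≤ x / (2:ℝ)^j := (le_div_iff₀ hp).2 h.1
  have h2 : x / (2:ℝ)^j < (n:ℝ) + 1 := (div_lt_iff₀ hp).2 h.2
  have hfl : ⌊x / (2:ℝ)^j⌋ = (n:ℤ) :=
    Int.floor_eq_iff.2 ⟨by exact_mod_cast h1, by exact_mod_cast h2⟩
  simp [dc, hfl]

lemma dI_succ {x : ℝ} (hx : 0 ≤ x) (j : ℤ) : dI x j ⊆ dI x (j+1) := by
  have hp : (0:ℝ) < (2:ℝ)^j := by positivity
  have h2 : ((2:ℝ)^(j+1)) = 2 * (2:ℝ)^j := by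
    rw [zpow_add_one₀ (by norm_num : (2:ℝ) ≠ 0)]; ring
  set s := x / (2:ℝ)^(j+1) with hs
  have hss : x / (2:ℝ)^j = 2 * s := by
    rw [hs, h2]; field_simp
  have f1 : (2:ℤ) * ⌊s⌋ ≤ ⌊(2:ℝ) * s⌋ := by
    apply Int.le_floor.2; push_cast; nlinarith [Int.floor_le s]
  have f2 : ⌊(2:ℝ) * s⌋ ≤ 2 * ⌊s⌋ + 1 := by
    have : (2:ℝ) * s < ((2 * ⌊s⌋ + 1 + 1 : ℤ) : ℝ) := by
      push_cast; nlinarith [Int.lt_floor_add_one s]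
    exact Int.lt_add_one_iff.mp (Int.floor_lt.2 this)
  have e1 : ((dc x j : ℕ) : ℝ) = (⌊(2:ℝ)*s⌋ : ℤ) := by rw [dc_cast hx, hss]
  have e2 : ((dc x (j+1) : ℕ) : ℝ) = (⌊s⌋ : ℤ) := by rw [dc_cast hx]
  set a := ((⌊s⌋ : ℤ) : ℝ)
  set b := ((⌊(2:ℝ)*s⌋ : ℤ) : ℝ)
  have f1' : 2 * a ≤ b := by
    have : (((2:ℤ) * ⌊s⌋ : ℤ) : ℝ) ≤ ((⌊(2:ℝ)*s⌋ : ℤ) : ℝ) := by exact_mod_cast f1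
    push_cast at this; linarith
  have f2' : b ≤ 2 * a + 1 := by
    have : ((⌊(2:ℝ)*s⌋ : ℤ) : ℝ) ≤ ((2 * ⌊s⌋ + 1 : ℤ) : ℝ) := by exact_mod_cast f2
    push_cast at this; linarith
  intro y hy
  obtain ⟨hy1, hy2⟩ := hy
  rw [e1] at hy1 hy2
  constructor
  · rw [e2, h2]; nlinarith
  · rw [e2, h2]; nlinarith

lemma dI_mono {x : ℝ} (hx : 0 ≤ x) {j j' : ℤ} (h : j ≤ j') : dI x j ⊆ dI x j' := by
  exact Int.le_induction (motive := fun t _ => dI x j ⊆ dI x t) subset_rfl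
    (fun n _ ih => ih.trans (dI_succ hx n)) j' h

lemma volume_dI (x : ℝ) (j : ℤ) : volume (dI x j) = ENNReal.ofReal ((2:ℝ)^j) := by
  rw [dI, Real.volume_Ico]
  congr 1; ring

lemma nonneg_of_mem_dI {x y : ℝ} {j : ℤ} (hy : y ∈ dI x j) : 0 ≤ y := by
  have : (0:ℝ) ≤ (dc x j : ℝ) * (2:ℝ)^j := by positivity
  exact this.trans hy.1

lemma dyadicDist_dI {x y : ℝ} (hx : 0 ≤ x) (j : ℤ) (hy : y ∈ dI x j)
    (hy' : y ∉ dI x (j-1)) : dyadicDist x y = (2:ℝ)^j := by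
  have hy0 : 0 ≤ y := nonneg_of_mem_dI hy
  have hne : x ≠ y := fun h => hy' (h ▸ mem_dI hx (j-1))
  rw [dyadicDist, if_neg hne]
  set S := {r : ℝ | ∃ (j' : ℤ) (k : ℕ), r = (2:ℝ) ^ (-j') ∧
    x ∈ Set.Ico ((k : ℝ) * (2:ℝ) ^ (-j')) (((k : ℝ) + 1) * (2:ℝ) ^ (-j')) ∧
    y ∈ Set.Ico ((k : ℝ) * (2:ℝ) ^ (-j')) (((k : ℝ) + 1) * (2:ℝ) ^ (-j'))} with hS
  have hmem : (2:ℝ)^j ∈ S := by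
    refine ⟨-j, dc x j, by rw [neg_neg], ?_, ?_⟩
    · rw [neg_neg]; exact mem_dI hx j
    · rw [neg_neg]; exact hy
  have hlb : ∀ r ∈ S, (2:ℝ)^j ≤ r := by
    rintro r ⟨j', n, rfl, hxI, hyI⟩
    by_contra hlt
    push_neg at hlt
    have hj : -j' < j := (zpow_lt_zpow_iff_right₀ (by norm_num : (1:ℝ) < 2)).1 hlt
    have hn : n = dc x (-j') := dI_unique hx (-j') n hxI
    have hyD : y ∈ dI x (-j') := by rw [dI, ← hn]; exact hyI
    exact hy' (dI_mono hx (by omega : -j' ≤ j - 1) hyD)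
  exact le_antisymm (csInf_le ⟨(2:ℝ)^j, hlb⟩ hmem) (le_csInf ⟨_, hmem⟩ hlb)

lemma dI_of_lt {x : ℝ} (hx : 0 ≤ x) {j : ℤ} (h : x < (2:ℝ)^j) :
    dI x j = Set.Ico 0 ((2:ℝ)^j) := by
  have hp : (0:ℝ) < (2:ℝ)^j := by positivity
  have h0 : dc x j = 0 := by
    have : ⌊x / (2:ℝ)^j⌋ = 0 := by
      rw [Int.floor_eq_zero_iff]
      constructor
      · exact div_nonneg hx hp.le
      · rw [div_lt_one hp]; exact h
    simp [dc, this]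
  simp [dI, h0]

lemma iUnion_dI_diff {x : ℝ} (hx : 0 ≤ x) :
    (⋃ j : ℤ, dI x j \ dI x (j-1)) = Set.Ici (0:ℝ) \ {x} := by
  ext y
  simp only [mem_iUnion, mem_diff, mem_Ici, mem_singleton_iff]
  constructor
  · rintro ⟨j, hy, hy'⟩
    refine ⟨nonneg_of_mem_dI hy, fun h => hy' ?_⟩
    rw [h]; exact mem_dI hx (j-1)
  · rintro ⟨hy0, hne⟩
    obtain ⟨n, hn⟩ := pow_unbounded_of_one_lt (max x y) (by norm_num : (1:ℝ) < 2)
    have hbig : y ∈ dI x (n:ℤ) := by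
      rw [dI_of_lt hx (by rw [zpow_natCast]; exact (le_max_left x y).trans_lt hn)]
      exact ⟨hy0, by rw [zpow_natCast]; exact (le_max_right x y).trans_lt hn⟩
    have hd : 0 < |y - x| := abs_pos.2 (sub_ne_zero.2 (fun h => hne h))
    obtain ⟨m, hm⟩ := pow_unbounded_of_one_lt (1/|y - x|) (by norm_num : (1:ℝ) < 2)
    have hsmall : y ∉ dI x (-(m:ℤ)) := by
      intro hyI
      have hxI := mem_dI hx (-(m:ℤ))
      have hlen : |y - x| < (2:ℝ)^(-(m:ℤ)) := by
        rw [abs_sub_lt_iff]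
        constructor <;> nlinarith [hyI.1, hyI.2, hxI.1, hxI.2]
      have h2 : (2:ℝ)^(-(m:ℤ)) = 1 / 2^m := by
        rw [zpow_neg, zpow_natCast]; ring
      rw [h2] at hlen
      have h2m : (0:ℝ) < 2^m := by positivity
      rw [div_lt_iff₀ hd] at hm
      rw [lt_div_iff₀ h2m] at hlen
      nlinarith
    have hbdd : ∃ b : ℤ, ∀ z : ℤ, y ∈ dI x z → b ≤ z := by
      refine ⟨-(m:ℤ) + 1, fun z hz => ?_⟩
      by_contra hlt
      push_neg at hlt
      exact hsmall (dI_mono hx (by omega) hz)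
    obtain ⟨j₀, hj₀, hleast⟩ := Int.exists_least_of_bdd (P := fun j => y ∈ dI x j)
      hbdd ⟨(n:ℤ), hbig⟩
    refine ⟨j₀, hj₀, fun hcon => ?_⟩
    have := hleast _ hcon
    omega

/-! ### The normalization sum -/

lemma key_sum (K : ℝ → ℝ → ℝ) (k : ℤ → ℝ)
    (x₀ : ℝ) (hx₀ : 0 ≤ x₀)
    (hKnorm : (∫ y in Set.Ici (0:ℝ), K x₀ y) = 1)
    (hknn : ∀ j : ℤ, 0 ≤ k j)
    (hK0 : ∀ y : ℝ, 0 ≤ y → 0 ≤ K x₀ y)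
    (hk : ∀ (j : ℤ) (y : ℝ), 0 ≤ y → dyadicDist x₀ y = (2:ℝ) ^ j → K x₀ y = k j) :
    Summable (fun j : ℤ => k j * (2:ℝ)^(j-1)) ∧
      (∑' j : ℤ, k j * (2:ℝ)^(j-1)) = 1 := by
  set A : ℤ → Set ℝ := fun j => dI x₀ j \ dI x₀ (j-1) with hA
  have hAm : ∀ j, MeasurableSet (A j) := fun j => measurableSet_Ico.diff measurableSet_Ico
  have hdisj : Pairwise (Function.onFun Disjoint A) := by
    intro i j hij
    rcases hij.lt_or_gt with h | h
    · refine Set.disjoint_left.2 fun y hyi hyj => ?_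
      exact hyj.2 (dI_mono hx₀ (by omega : i ≤ j - 1) hyi.1)
    · refine Set.disjoint_left.2 fun y hyi hyj => ?_
      exact hyi.2 (dI_mono hx₀ (by omega : j ≤ i - 1) hyj.1)
  have hInt : Integrable (K x₀) (volume.restrict (Set.Ici 0)) := by
    by_contra h
    rw [integral_undef h] at hKnorm
    norm_num at hKnorm
  have hae : 0 ≤ᵐ[volume.restrict (Set.Ici (0:ℝ))] K x₀ := by
    refine (ae_restrict_iff' measurableSet_Ici).2 (Filter.Eventually.of_forall ?_)
    exact fun y hy => hK0 y hy
  have l1 : ENNReal.ofReal 1 = ∫⁻ y in Set.Ici (0:ℝ), ENNReal.ofReal (K x₀ y) := by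
    rw [← hKnorm]
    exact ofReal_integral_eq_lintegral_ofReal hInt hae
  have hsetae : (Set.Ici (0:ℝ) : Set ℝ) =ᵐ[volume] ⋃ j : ℤ, A j := by
    rw [hA]
    simp only []
    rw [iUnion_dI_diff hx₀]
    exact (MeasureTheory.diff_ae_eq_self.2
      (measure_mono_null Set.inter_subset_right (Real.volume_singleton))).symm
  have l2 : (∫⁻ y in Set.Ici (0:ℝ), ENNReal.ofReal (K x₀ y)) =
      ∑' j : ℤ, ∫⁻ y in A j, ENNReal.ofReal (K x₀ y) := by
    rw [setLIntegral_congr hsetae, lintegral_iUnion hAm hdisj]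
  have l4 : ∀ j : ℤ, (∫⁻ y in A j, ENNReal.ofReal (K x₀ y)) =
      ENNReal.ofReal (k j * (2:ℝ)^(j-1)) := by
    intro j
    have hcong : ∀ y ∈ A j, ENNReal.ofReal (K x₀ y) = ENNReal.ofReal (k j) := by
      intro y hy
      rw [hk j y (nonneg_of_mem_dI hy.1) (dyadicDist_dI hx₀ j hy.1 hy.2)]
    rw [setLIntegral_congr_fun (hAm j) hcong,
      setLIntegral_const]
    have hvol : volume (A j) = ENNReal.ofReal ((2:ℝ)^(j-1)) := by
      rw [hA]
      simp only []
      rw [measure_diff (dI_mono hx₀ (by omega : j - 1 ≤ j))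
        measurableSet_Ico.nullMeasurableSet
        (by rw [volume_dI]; exact ENNReal.ofReal_ne_top),
        volume_dI, volume_dI,
        ← ENNReal.ofReal_sub ((2:ℝ)^j) (le_of_lt (by positivity : (0:ℝ) < (2:ℝ)^(j-1)))]
      congr 1
      have : (2:ℝ)^j = (2:ℝ)^(j-1) * 2 := by
        rw [← zpow_add_one₀ (by norm_num : (2:ℝ) ≠ 0)]; congr 1; omega
      rw [this]; ring
    rw [hvol, ← ENNReal.ofReal_mul (hknn j)]
  have hE : (∑' j : ℤ, ENNReal.ofReal (k j * (2:ℝ)^(j-1))) = 1 := by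
    rw [← l2.trans (tsum_congr l4), ← l1, ENNReal.ofReal_one]
  have hfin : (∑' j : ℤ, ENNReal.ofReal (k j * (2:ℝ)^(j-1))) ≠ ⊤ := by
    rw [hE]; exact ENNReal.one_ne_top
  have hnn : ∀ j : ℤ, 0 ≤ k j * (2:ℝ)^(j-1) := fun j => mul_nonneg (hknn j) (by positivity)
  have hsum : Summable (fun j : ℤ => k j * (2:ℝ)^(j-1)) := by
    have := ENNReal.summable_toReal hfin
    refine this.congr fun j => ?_
    rw [ENNReal.toReal_ofReal (hnn j)]
  refine ⟨hsum, ?_⟩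
  have := ENNReal.tsum_toReal_eq (fun j : ℤ => ENNReal.ofReal_ne_top)
    (f := fun j : ℤ => ENNReal.ofReal (k j * (2:ℝ)^(j-1)))
  rw [hE] at this
  simp only [ENNReal.toReal_one] at this
  rw [this]
  exact tsum_congr fun j => (ENNReal.toReal_ofReal (hnn j)).symm

/-! ### Rewriting `Λ_j` via the tail sums -/

lemma alphaOf_eq (k : ℤ → ℝ) (g : ℤ → ℝ) (hg : ∀ i : ℤ, g i = k i * (2:ℝ)^(i-1)) (l : ℤ) :
    alphaOf k l = 2 * g (-l) - g (-l+1) := by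
  rw [alphaOf, hg, hg]
  have h1 : (2:ℝ)^(-l) = 2 * (2:ℝ)^(-l-1) := by
    rw [show (-l : ℤ) = (-l-1)+1 by omega, zpow_add_one₀ (by norm_num : (2:ℝ) ≠ 0)]; ring
  have h2 : (-l + 1 - 1 : ℤ) = -l := by omega
  rw [h2, h1]; ring

lemma LambdaOf_eq (k : ℤ → ℝ) (g : ℤ → ℝ) (hg : ∀ i : ℤ, g i = k i * (2:ℝ)^(i-1))
    (hsum : Summable g) (j : ℤ) :
    LambdaOf k j = (∑' m : ℕ, g (-j-1-m)) - g (-j) := by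
  have einj : Function.Injective (fun m : ℕ => -j-1-(m:ℤ)) := by
    intro a b h; simpa using h
  have einj' : Function.Injective (fun m : ℕ => -j-(m:ℤ)) := by
    intro a b h; simpa using h
  have hb : Summable (fun m : ℕ => g (-j-1-m)) := hsum.comp_injective einj
  have hc : Summable (fun m : ℕ => g (-j-m)) := hsum.comp_injective einj'
  have hform : ∀ m : ℕ, alphaOf k (j + 1 + m) = 2 * g (-j-1-m) - g (-j-m) := by
    intro m
    have e2 : -(j + 1 + (m:ℤ)) + 1 = -j-m := by omega
    have e1 : -(j + 1 + (m:ℤ)) = -j-1-m := by omega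
    rw [alphaOf_eq k g hg, e2, e1]
  rw [LambdaOf, tsum_congr hform, Summable.tsum_sub ((hb.mul_left 2)) hc, tsum_mul_left]
  have hc0 : (∑' m : ℕ, g (-j-m)) = g (-j) + ∑' m : ℕ, g (-j-(m+1)) := by
    rw [hc.tsum_eq_zero_add]
    norm_num
  have h3 : (∑' m : ℕ, g (-j-(m+1))) = ∑' m : ℕ, g (-j-1-m) := by
    apply tsum_congr; intro m; congr 1; omega
  rw [hc0, h3]; ring

/-! ### Main theorem -/

/-- Lemma 3 (5.g) and (5.h): for `K ∈ 𝒦` with level values `k_j` and associated sequence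
`Λ_j = Σ_{l>j} α_l`, one has `sup_j Λ_j = 1` and `inf_j Λ_j ≥ -1`. -/
theorem kernel_Lambda_sup_inf (K : ℝ → ℝ → ℝ) (k : ℤ → ℝ)
    (hK0 : ∀ x y : ℝ, 0 ≤ x → 0 ≤ y → 0 ≤ K x y)
    (hKdist : ∀ x y x' y' : ℝ, 0 ≤ x → 0 ≤ y → 0 ≤ x' → 0 ≤ y' →
      dyadicDist x y = dyadicDist x' y' → K x y = K x' y')
    (x₀ : ℝ) (hx₀ : 0 ≤ x₀)
    (hKnorm : (∫ y in Set.Ici (0:ℝ), K x₀ y) = 1)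
    (hk : ∀ (j : ℤ) (x y : ℝ), 0 ≤ x → 0 ≤ y → dyadicDist x y = (2:ℝ) ^ j → K x y = k j) :
    (⨆ j : ℤ, LambdaOf k j) = 1 ∧ -1 ≤ ⨅ j : ℤ, LambdaOf k j := by
  -- nonnegativity of the level values
  have hknn : ∀ j : ℤ, 0 ≤ k j := by
    intro j
    have hmem : (2:ℝ)^(j-1) ∈ dI 0 j := by
      rw [dI_of_lt le_rfl (by positivity : (0:ℝ) < (2:ℝ)^j)]
      exact ⟨by positivity, (zpow_lt_zpow_iff_right₀ (by norm_num : (1:ℝ) < 2)).2 (by omega)⟩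
    have hnot : (2:ℝ)^(j-1) ∉ dI 0 (j-1) := by
      rw [dI_of_lt le_rfl (by positivity : (0:ℝ) < (2:ℝ)^(j-1))]
      exact fun h => lt_irrefl _ h.2
    have hd : dyadicDist 0 ((2:ℝ)^(j-1)) = (2:ℝ)^j := dyadicDist_dI le_rfl j hmem hnot
    have := hk j 0 ((2:ℝ)^(j-1)) le_rfl (by positivity) hd
    rw [← this]
    exact hK0 0 _ le_rfl (by positivity)
  set g : ℤ → ℝ := fun i => k i * (2:ℝ)^(i-1) with hgdef
  obtain ⟨hsum, htsum⟩ := key_sum K k x₀ hx₀ hKnorm hknn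
    (fun y hy => hK0 x₀ y hx₀ hy) (fun j y hy hd => hk j x₀ y hx₀ hy hd)
  have hgnn : ∀ i : ℤ, 0 ≤ g i := fun i => mul_nonneg (hknn i) (by positivity)
  have hL : ∀ j : ℤ, LambdaOf k j = (∑' m : ℕ, g (-j-1-m)) - g (-j) :=
    LambdaOf_eq k g (fun _ => rfl) hsum
  have hbsum : ∀ j : ℤ, Summable (fun m : ℕ => g (-j-1-m)) := by
    intro j
    exact hsum.comp_injective (fun a b h => by simpa using h)
  have hT1 : ∀ j : ℤ, (∑' m : ℕ, g (-j-1-m)) ≤ 1 := by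
    intro j
    rw [← htsum]
    exact (hbsum j).tsum_le_tsum_of_inj (fun m : ℕ => -j-1-(m:ℤ)) (fun a b h => by simpa using h)
      (fun c _ => hgnn c) (fun m => le_rfl) hsum
  have hT0 : ∀ j : ℤ, 0 ≤ (∑' m : ℕ, g (-j-1-m)) :=
    fun j => tsum_nonneg (fun m => hgnn _)
  have hg1 : ∀ i : ℤ, g i ≤ 1 := by
    intro i
    rw [← htsum]
    exact Summable.le_tsum hsum i (fun i' _ => hgnn i')
  have hub : ∀ j : ℤ, LambdaOf k j ≤ 1 := by
    intro j; rw [hL j]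
    have := hgnn (-j); have := hT1 j; linarith
  have hlb : ∀ j : ℤ, -1 ≤ LambdaOf k j := by
    intro j; rw [hL j]
    have := hg1 (-j); have := hT0 j; linarith
  constructor
  · refine ciSup_eq_of_forall_le_of_forall_lt_exists_gt hub ?_
    intro w hw
    have hhas : HasSum g 1 := htsum ▸ hsum.hasSum
    have hev := hhas.eventually (Ioi_mem_nhds (by linarith : 1 - (1-w)/2 < 1))
    obtain ⟨F₀, hF₀⟩ := hev.exists
    obtain ⟨N, hN⟩ := F₀.exists_le
    refine ⟨-(N+1), ?_⟩
    set j : ℤ := -(N+1) with hj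
    -- sum over F₀ is at most the tail sum
    have hclaim1 : (∑ p ∈ F₀, g p) ≤ ∑' m : ℕ, g (-j-1-m) := by
      have himg : (∑ p ∈ F₀, g p) = ∑ q ∈ F₀.image (fun p => (N - p).toNat),
          g (-j-1-(q:ℤ)) := by
        rw [Finset.sum_image (fun p hp p' hp' h => by
          have := hN p hp; have := hN p' hp'; omega)]
        apply Finset.sum_congr rfl
        intro p hp
        have := hN p hp
        congr 1
        omega
      rw [himg]
      exact (hbsum j).sum_le_tsum _ (fun m _ => hgnn _)
    have hnotin : (-j : ℤ) ∉ F₀ := fun h => by have := hN _ h; omega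
    have hclaim2 : g (-j) ≤ 1 - ∑ p ∈ F₀, g p := by
      have hins : (∑ p ∈ insert (-j) F₀, g p) ≤ 1 := by
        rw [← htsum]
        exact hsum.sum_le_tsum _ (fun i _ => hgnn i)
      rw [Finset.sum_insert hnotin] at hins
      linarith
    rw [hL]
    linarith
  · exact le_ciInf hlb
end

section
/- Let (Λ_j : j ∈ ℤ) be a decreasing sequence of real numbers with Λ_j → 1 as j → −∞ and Λ_j → 0 as j → +∞. Then the kernel K(x,y) = Σ_{j∈ℤ} (Λ_{j−1} − Λ_j)·2^j·χ_{(0,2^{-j}]}(δ(x,y)) belongs to 𝒦, i.e. K ≥ 0, K depends only on δ, and ∫_{ℝ⁺} K(x,y) dy = 1 for every x ∈ ℝ⁺; moreover K is the unique kernel in 𝒦 whose associated sequence Λ_j = Σ_{l>j} 2^{-l}(k_{-l} − k_{-l+1}) is the given sequence. -/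
open MeasureTheory Set Filter

/-- The kernel associated to a sequence `Λ`:
`K(x,y) = Σ_{j∈ℤ} (Λ_{j-1} - Λ_j)·2^j·χ_{(0,2^{-j}]}(δ(x,y))`. -/
noncomputable def kernelOfLambda (Λ : ℤ → ℝ) (x y : ℝ) : ℝ :=
  ∑' j : ℤ, (Λ (j - 1) - Λ j) *
    ((2:ℝ) ^ j * (if dyadicDist x y ∈ Set.Ioc (0:ℝ) ((2:ℝ) ^ (-j)) then 1 else 0))

lemma floor_half (a : ℝ) : ⌊a / 2⌋ = ⌊a⌋ / 2 := by
  have h1 : (⌊a⌋ : ℝ) ≤ a := Int.floor_le a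
  have h2 : a < ⌊a⌋ + 1 := Int.lt_floor_add_one a
  have e1 : 2 * (⌊a⌋ / 2) ≤ ⌊a⌋ ∧ ⌊a⌋ < 2 * (⌊a⌋ / 2) + 2 := by omega
  rw [Int.floor_eq_iff]
  constructor
  · have : ((2 * (⌊a⌋ / 2) : ℤ) : ℝ) ≤ (⌊a⌋ : ℝ) := by exact_mod_cast e1.1
    push_cast at this ⊢
    linarith
  · have e2 : ⌊a⌋ ≤ 2 * (⌊a⌋ / 2) + 1 := by omega
    have : ((⌊a⌋ : ℤ) : ℝ) ≤ ((2 * (⌊a⌋ / 2) + 1 : ℤ) : ℝ) := by exact_mod_cast e2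
    push_cast at this ⊢
    linarith

/-- membership in dyadic interval at level j iff floors agree -/
lemma mem_Ico_iff_floor (j : ℤ) (m : ℤ) (y : ℝ) :
    y ∈ Set.Ico ((m : ℝ) * (2:ℝ) ^ (-j)) (((m : ℝ) + 1) * (2:ℝ) ^ (-j)) ↔ ⌊(2:ℝ) ^ j * y⌋ = m := by
  have h2 : (0:ℝ) < (2:ℝ) ^ j := by positivity
  rw [Int.floor_eq_iff]
  constructor
  · rintro ⟨h1', h2'⟩
    constructor
    · calc (m:ℝ) = (m * (2:ℝ)^(-j)) * (2:ℝ)^j := by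
            rw [mul_assoc, ← zpow_add₀ (by norm_num : (2:ℝ) ≠ 0)]; simp
        _ ≤ y * (2:ℝ)^j := by gcongr
        _ = (2:ℝ)^j * y := mul_comm _ _
    · calc (2:ℝ)^j * y = y * (2:ℝ)^j := mul_comm _ _
        _ < ((m+1) * (2:ℝ)^(-j)) * (2:ℝ)^j := by gcongr
        _ = (m:ℝ)+1 := by
            rw [mul_assoc, ← zpow_add₀ (by norm_num : (2:ℝ) ≠ 0)]; simp
  · rintro ⟨h1', h2'⟩
    constructor
    · rw [zpow_neg, ← div_eq_mul_inv, div_le_iff₀ h2]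
      linarith [mul_comm ((2:ℝ)^j) y]
    · rw [zpow_neg, ← div_eq_mul_inv, lt_div_iff₀ h2]
      linarith [mul_comm ((2:ℝ)^j) y]

/-- same dyadic interval predicate -/
def inT (x y : ℝ) (j : ℤ) : Prop := ⌊(2:ℝ) ^ j * x⌋ = ⌊(2:ℝ) ^ j * y⌋

lemma inT_step {x y : ℝ} {j : ℤ} (h : inT x y j) : inT x y (j - 1) := by
  unfold inT at *
  have e : ∀ z : ℝ, (2:ℝ) ^ (j-1) * z = ((2:ℝ) ^ j * z) / 2 := by
    intro z
    rw [div_eq_mul_inv, mul_assoc, mul_comm z, ← mul_assoc, ← zpow_sub_one₀ (by norm_num : (2:ℝ) ≠ 0)]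
  rw [e x, e y, floor_half, floor_half, h]

lemma inT_mono {x y : ℝ} {j j' : ℤ} (hj : j' ≤ j) (h : inT x y j) : inT x y j' := by
  have key : ∀ n : ℕ, inT x y (j - n) := by
    intro n
    induction n with
    | zero => simpa using h
    | succ m ih =>
      have := inT_step ih
      have e : j - (m+1 : ℕ) = j - m - 1 := by push_cast; ring
      rwa [e]
  have : j' = j - ((j - j').toNat : ℕ) := by
    rw [Int.toNat_of_nonneg (by omega)]; ring
  rw [this]; exact key _

lemma inT_nonempty {x y : ℝ} (hx : 0 ≤ x) (hy : 0 ≤ y) : ∃ j : ℤ, inT x y j := by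
  obtain ⟨n, hn⟩ := exists_nat_gt (max x y)
  refine ⟨-n, ?_⟩
  have h2 : (0:ℝ) < (2:ℝ) ^ (-n : ℤ) := by positivity
  have hle : (2:ℝ) ^ (-n : ℤ) ≤ 1 / n.succ * (n.succ : ℝ) := by
    rw [one_div_mul_cancel (by positivity)]
    calc (2:ℝ) ^ (-n:ℤ) = ((2:ℝ)^(n:ℤ))⁻¹ := by rw [zpow_neg]
      _ ≤ 1 := by
          rw [inv_le_one_iff₀]
          right
          exact one_le_zpow₀ (by norm_num) (by positivity)
  have key : ∀ z : ℝ, 0 ≤ z → z < n → ⌊(2:ℝ) ^ (-n:ℤ) * z⌋ = 0 := by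
    intro z hz hzn
    rw [Int.floor_eq_iff]
    constructor
    · push_cast; positivity
    · push_cast
      have h1 : (2:ℝ) ^ (-n:ℤ) * z < (2:ℝ)^(-n:ℤ) * n := by
        rcases eq_or_lt_of_le hz with h|h
        · rw [← h]; simpa using mul_pos h2 (lt_of_le_of_lt hz hzn)
        · exact (mul_lt_mul_iff_right₀ h2).2 hzn
      have h3 : (2:ℝ) ^ (-n:ℤ) * n ≤ 1 := by
        have : ((2:ℝ)^(n:ℤ))⁻¹ * n ≤ 1 := by
          rw [inv_mul_le_iff₀ (by positivity), mul_one]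
          calc (n:ℝ) ≤ 2^(n:ℕ) := by exact_mod_cast Nat.le_of_lt (Nat.lt_two_pow_self (n := n))
            _ = (2:ℝ)^(n:ℤ) := by rw [zpow_natCast]
        rwa [zpow_neg]
      linarith
  unfold inT
  rw [key x hx (lt_of_le_of_lt (le_max_left x y) hn),
      key y hy (lt_of_le_of_lt (le_max_right x y) hn)]

lemma inT_bddAbove {x y : ℝ} (hxy : x ≠ y) : ∃ M : ℤ, ∀ j : ℤ, inT x y j → j ≤ M := by
  have hd : 0 < |x - y| := abs_pos.2 (sub_ne_zero.2 hxy)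
  obtain ⟨N, hN⟩ := pow_unbounded_of_one_lt |x - y|⁻¹ (by norm_num : (1:ℝ) < 2)
  refine ⟨N, ?_⟩
  intro j hj
  by_contra hcon
  push_neg at hcon
  -- j > N ; inT x y j gives |x - y| < 2^{-j}
  have hfl := hj
  unfold inT at hfl
  have h2 : (0:ℝ) < (2:ℝ) ^ j := by positivity
  have hxm := (mem_Ico_iff_floor j ⌊(2:ℝ)^j * x⌋ x).2 rfl
  have hym := (mem_Ico_iff_floor j ⌊(2:ℝ)^j * x⌋ y).2 hfl.symm
  have hlt : |x - y| < (2:ℝ) ^ (-j) := by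
    rw [abs_sub_lt_iff]
    obtain ⟨hx1, hx2⟩ := hxm
    obtain ⟨hy1, hy2⟩ := hym
    constructor <;> nlinarith [zpow_pos (by norm_num : (0:ℝ) < 2) (-j)]
  have h1 : (2:ℝ) ^ (-N:ℤ) < (2:ℝ) ^ (-j) := by
    -- since |x-y|⁻¹ < 2^N, we get 2^{-N} < |x-y| < 2^{-j}
    have h2N : (2:ℝ) ^ (-N:ℤ) < |x - y| := by
      rw [zpow_neg, inv_lt_comm₀ (by positivity) hd]
      calc |x - y|⁻¹ < 2 ^ N := hN
        _ = (2:ℝ) ^ (N:ℤ) := by rw [zpow_natCast]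
    linarith
  have := (zpow_lt_zpow_iff_right₀ (by norm_num : (1:ℝ) < 2)).1 h1
  omega


/-- The defining set of dyadicDist equals `{2^{-j} : j ∈ T}`. -/
lemma dyadic_set_eq (x y : ℝ) (hx : 0 ≤ x) (hy : 0 ≤ y) :
    {r : ℝ | ∃ (j : ℤ) (k : ℕ), r = (2:ℝ) ^ (-j) ∧
      x ∈ Set.Ico ((k : ℝ) * (2:ℝ) ^ (-j)) (((k : ℝ) + 1) * (2:ℝ) ^ (-j)) ∧
      y ∈ Set.Ico ((k : ℝ) * (2:ℝ) ^ (-j)) (((k : ℝ) + 1) * (2:ℝ) ^ (-j))}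
    = {r : ℝ | ∃ j : ℤ, r = (2:ℝ) ^ (-j) ∧ inT x y j} := by
  ext r
  simp only [Set.mem_setOf_eq]
  constructor
  · rintro ⟨j, k, hr, hxk, hyk⟩
    exact ⟨j, hr, ((mem_Ico_iff_floor j k x).1 hxk).trans (((mem_Ico_iff_floor j k y).1 hyk)).symm⟩
  · rintro ⟨j, hr, hT⟩
    have hfl0 : 0 ≤ ⌊(2:ℝ)^j * x⌋ := Int.floor_nonneg.2 (by positivity)
    refine ⟨j, ⌊(2:ℝ)^j * x⌋.toNat, hr, ?_, ?_⟩
    · rw [show ((⌊(2:ℝ)^j * x⌋.toNat : ℕ) : ℝ) = ((⌊(2:ℝ)^j * x⌋ : ℤ) : ℝ) by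
        exact_mod_cast Int.toNat_of_nonneg hfl0]
      exact (mem_Ico_iff_floor j _ x).2 rfl
    · rw [show ((⌊(2:ℝ)^j * x⌋.toNat : ℕ) : ℝ) = ((⌊(2:ℝ)^j * x⌋ : ℤ) : ℝ) by
        exact_mod_cast Int.toNat_of_nonneg hfl0]
      exact (mem_Ico_iff_floor j _ y).2 hT.symm

/-- Main structure lemma: the dyadic distance is `2^{-j₀}` for the maximal level `j₀`. -/
lemma exists_j0 {x y : ℝ} (hx : 0 ≤ x) (hy : 0 ≤ y) (hxy : x ≠ y) :
    ∃ j₀ : ℤ, dyadicDist x y = (2:ℝ) ^ (-j₀) ∧ ∀ j : ℤ, inT x y j ↔ j ≤ j₀ := by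
  obtain ⟨M, hM⟩ := inT_bddAbove hxy
  obtain ⟨j₀, hj₀T, hj₀max⟩ := Int.exists_greatest_of_bdd ⟨M, hM⟩ (inT_nonempty hx hy)
  refine ⟨j₀, ?_, fun j => ⟨hj₀max j, fun hj => inT_mono hj hj₀T⟩⟩
  unfold dyadicDist
  rw [if_neg hxy, dyadic_set_eq x y hx hy]
  apply le_antisymm
  · refine csInf_le ?_ ⟨j₀, rfl, hj₀T⟩
    refine ⟨0, ?_⟩
    rintro r ⟨j, hr, -⟩
    rw [hr]; positivity
  · refine le_csInf ⟨(2:ℝ)^(-j₀), ?_⟩ ?_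
    · exact ⟨j₀, rfl, hj₀T⟩
    rintro r ⟨j, hr, hT⟩
    rw [hr]
    exact zpow_le_zpow_right₀ (by norm_num) (by simpa using hj₀max j hT)

lemma dyadicDist_Ioc_iff {x y : ℝ} (hx : 0 ≤ x) (hy : 0 ≤ y) (j : ℤ) :
    dyadicDist x y ∈ Set.Ioc (0:ℝ) ((2:ℝ) ^ (-j)) ↔ x ≠ y ∧ inT x y j := by
  rcases eq_or_ne x y with h|h
  · simp [dyadicDist, h]
  · obtain ⟨j₀, hd, hT⟩ := exists_j0 hx hy h
    rw [hd]
    simp only [Set.mem_Ioc, h, ne_eq, not_false_eq_true, true_and, hT j]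
    constructor
    · rintro ⟨-, h2⟩
      have := (zpow_le_zpow_iff_right₀ (by norm_num : (1:ℝ) < 2)).1 h2
      omega
    · intro hj
      exact ⟨by positivity, zpow_le_zpow_right₀ (by norm_num) (by omega)⟩

lemma dyadicDist_eq_iff {x y : ℝ} (hx : 0 ≤ x) (hy : 0 ≤ y) (hxy : x ≠ y) (l : ℤ) :
    dyadicDist x y = (2:ℝ) ^ (-l) ↔ (inT x y l ∧ ¬ inT x y (l+1)) := by
  obtain ⟨j₀, hd, hT⟩ := exists_j0 hx hy hxy
  rw [hd, hT, hT]
  constructor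
  · intro h
    have h' : (-l : ℤ) = -j₀ := by
      by_contra hne
      rcases lt_or_gt_of_ne hne with hlt|hlt
      · exact absurd h.symm (ne_of_lt (zpow_lt_zpow_right₀ (by norm_num : (1:ℝ) < 2) hlt))
      · exact absurd h (ne_of_lt (zpow_lt_zpow_right₀ (by norm_num : (1:ℝ) < 2) hlt))
    omega
  · rintro ⟨h1, h2⟩
    have : l = j₀ := by omega
    rw [this]

/-- The dyadic interval of level `j` containing `x`. -/
noncomputable def Dint (x : ℝ) (j : ℤ) : Set ℝ :=
  Set.Ico ((⌊(2:ℝ)^j * x⌋ : ℝ) * (2:ℝ)^(-j)) (((⌊(2:ℝ)^j * x⌋ : ℝ) + 1) * (2:ℝ)^(-j))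

lemma mem_Dint_iff {x : ℝ} {j : ℤ} {y : ℝ} : y ∈ Dint x j ↔ inT x y j := by
  rw [Dint, mem_Ico_iff_floor j _ y]
  exact ⟨fun h => h.symm, fun h => h.symm⟩

lemma self_mem_Dint (x : ℝ) (j : ℤ) : x ∈ Dint x j := mem_Dint_iff.2 rfl

lemma Dint_subset_Ici {x : ℝ} (hx : 0 ≤ x) (j : ℤ) : Dint x j ⊆ Set.Ici 0 := by
  intro y hy
  have h0 : (0:ℝ) ≤ (⌊(2:ℝ)^j * x⌋ : ℝ) * (2:ℝ)^(-j) := by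
    have : (0:ℤ) ≤ ⌊(2:ℝ)^j * x⌋ := Int.floor_nonneg.2 (by positivity)
    have : (0:ℝ) ≤ (⌊(2:ℝ)^j * x⌋ : ℝ) := by exact_mod_cast this
    positivity
  exact le_trans h0 hy.1

lemma Dint_anti {x : ℝ} {j j' : ℤ} (h : j ≤ j') : Dint x j' ⊆ Dint x j := by
  intro y hy
  exact mem_Dint_iff.2 (inT_mono h (mem_Dint_iff.1 hy))

lemma measurableSet_Dint (x : ℝ) (j : ℤ) : MeasurableSet (Dint x j) := measurableSet_Ico

lemma volume_Dint (x : ℝ) (j : ℤ) : volume (Dint x j) = ENNReal.ofReal ((2:ℝ)^(-j)) := by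
  rw [Dint, Real.volume_Ico]
  congr 1
  ring

/-- For `x ≥ 0`, the set of `y ≥ 0` with `0 < δ(x,y) ≤ 2^{-j}` is the dyadic interval
of level `j` around `x`, minus `x` itself. -/
lemma Ioc_set_eq {x : ℝ} (hx : 0 ≤ x) (j : ℤ) :
    {y : ℝ | dyadicDist x y ∈ Set.Ioc (0:ℝ) ((2:ℝ)^(-j))} ∩ Set.Ici 0
      = Dint x j \ {x} := by
  ext y
  simp only [Set.mem_inter_iff, Set.mem_setOf_eq, Set.mem_Ici, Set.mem_diff,
    Set.mem_singleton_iff]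
  constructor
  · rintro ⟨h1, hy⟩
    rw [dyadicDist_Ioc_iff hx hy j] at h1
    exact ⟨mem_Dint_iff.2 h1.2, fun h => h1.1 h.symm⟩
  · rintro ⟨h1, h2⟩
    have hy : 0 ≤ y := Dint_subset_Ici hx j h1
    exact ⟨(dyadicDist_Ioc_iff hx hy j).2 ⟨fun h => h2 h.symm, mem_Dint_iff.1 h1⟩, hy⟩

/-- For `x ≥ 0`, the level set `{y ≥ 0 : δ(x,y) = 2^{-l}}` is a dyadic annulus. -/
lemma level_set_eq {x : ℝ} (hx : 0 ≤ x) (l : ℤ) :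
    {y : ℝ | dyadicDist x y = (2:ℝ)^(-l)} ∩ Set.Ici 0 = Dint x l \ Dint x (l+1) := by
  ext y
  simp only [Set.mem_inter_iff, Set.mem_setOf_eq, Set.mem_Ici, Set.mem_diff]
  constructor
  · rintro ⟨h1, hy⟩
    have hxy : x ≠ y := by
      intro h
      rw [dyadicDist, if_pos h] at h1
      have : (0:ℝ) < (2:ℝ)^(-l) := by positivity
      linarith [h1.symm]
    rw [dyadicDist_eq_iff hx hy hxy l] at h1
    exact ⟨mem_Dint_iff.2 h1.1, fun h => h1.2 (mem_Dint_iff.1 h)⟩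
  · rintro ⟨h1, h2⟩
    have hy : 0 ≤ y := Dint_subset_Ici hx l h1
    have hxy : x ≠ y := by
      intro h
      exact h2 (h ▸ self_mem_Dint x (l+1))
    exact ⟨(dyadicDist_eq_iff hx hy hxy l).2
      ⟨mem_Dint_iff.1 h1, fun h => h2 (mem_Dint_iff.2 h)⟩, hy⟩

lemma volume_Dint_diff (x : ℝ) (l : ℤ) :
    volume (Dint x l \ Dint x (l+1)) = ENNReal.ofReal ((2:ℝ)^(-(l+1))) := by
  rw [measure_diff (Dint_anti (by omega)) (measurableSet_Dint x (l+1)).nullMeasurableSet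
    (by rw [volume_Dint]; exact ENNReal.ofReal_ne_top),
    volume_Dint, volume_Dint, ← ENNReal.ofReal_sub _ (by positivity)]
  congr 1
  have : (2:ℝ)^(-l) = 2 * (2:ℝ)^(-(l+1)) := by
    rw [show (-l : ℤ) = (-(l+1)) + 1 by ring, zpow_add_one₀ (by norm_num : (2:ℝ) ≠ 0)]
    ring
  linarith

lemma volume_Dint_diff_singleton {x : ℝ} (hx : 0 ≤ x) (j : ℤ) :
    volume (Dint x j \ {x}) = ENNReal.ofReal ((2:ℝ)^(-j)) := by
  rw [measure_diff_null (measure_singleton x), volume_Dint]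

section LambdaSum
variable {Λ : ℤ → ℝ} (hmono : Antitone Λ)
  (hbot : Filter.Tendsto Λ Filter.atBot (nhds 1))
  (htop : Filter.Tendsto Λ Filter.atTop (nhds 0))

include hmono htop in
lemma Lambda_nonneg (j : ℤ) : 0 ≤ Λ j :=
  le_of_tendsto htop (eventually_atTop.2 ⟨j, fun n hn => hmono hn⟩)

include hmono hbot in
lemma Lambda_le_one (j : ℤ) : Λ j ≤ 1 :=
  ge_of_tendsto hbot (eventually_atBot.2 ⟨j, fun n hn => hmono hn⟩)

lemma telescope_Icc (N : ℕ) :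
    ∑ j ∈ Finset.Icc (-(N:ℤ)) N, (Λ (j-1) - Λ j) = Λ (-(N:ℤ)-1) - Λ N := by
  induction N with
  | zero => simp
  | succ n ih =>
    have h1 : Finset.Icc (-(n+1:ℕ):ℤ) ((n+1:ℕ):ℤ)
        = insert (-(n+1:ℕ):ℤ) (insert ((n+1:ℕ):ℤ) (Finset.Icc (-(n:ℕ):ℤ) (n:ℤ))) := by
      ext z
      simp only [Finset.mem_Icc, Finset.mem_insert]
      push_cast
      omega
    rw [h1, Finset.sum_insert, Finset.sum_insert, ih]
    · push_cast
      ring_nf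
    · simp only [Finset.mem_Icc]; omega
    · simp only [Finset.mem_insert, Finset.mem_Icc]
      push_cast
      omega

include hmono hbot htop in
lemma hasSum_Lambda_diff : HasSum (fun j : ℤ => Λ (j-1) - Λ j) 1 := by
  have hnn : ∀ j : ℤ, 0 ≤ Λ (j-1) - Λ j := fun j => sub_nonneg.2 (hmono (by omega))
  have hb : ∀ u : Finset ℤ, ∑ j ∈ u, (Λ (j-1) - Λ j) ≤ 1 := by
    intro u
    obtain ⟨N, hN⟩ : ∃ N : ℕ, ∀ z ∈ u, z ∈ Finset.Icc (-(N:ℤ)) N := by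
      rcases u.eq_empty_or_nonempty with h|h
      · exact ⟨0, by simp [h]⟩
      · obtain ⟨a, ha⟩ := u.exists_le
        obtain ⟨b, hbmem, hbmin⟩ := u.exists_min_image id h
        refine ⟨(a.natAbs + b.natAbs), fun z hz => Finset.mem_Icc.2 ?_⟩
        have h1 := ha z hz
        have h2 := hbmin z hz
        simp only [id] at h2
        omega
    calc ∑ j ∈ u, (Λ (j-1) - Λ j) ≤ ∑ j ∈ Finset.Icc (-(N:ℤ)) N, (Λ (j-1) - Λ j) :=
          Finset.sum_le_sum_of_subset_of_nonneg (fun z hz => hN z hz) (fun i _ _ => hnn i)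
      _ = Λ (-(N:ℤ)-1) - Λ N := telescope_Icc N
      _ ≤ 1 := by
          have := Lambda_le_one hmono hbot (-(N:ℤ)-1)
          have := Lambda_nonneg hmono htop (N:ℤ)
          linarith
  have hsummable : Summable (fun j : ℤ => Λ (j-1) - Λ j) := summable_of_sum_le hnn hb
  -- now identify the sum as the limit along Icc (-N) N
  have htend : Tendsto (fun N : ℕ => ∑ j ∈ Finset.Icc (-(N:ℤ)) N, (Λ (j-1) - Λ j))
      atTop (nhds (∑' j : ℤ, (Λ (j-1) - Λ j))) := by
    have hmonoF : Monotone (fun N : ℕ => Finset.Icc (-(N:ℤ)) N) := by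
      intro a b hab
      apply Finset.Icc_subset_Icc <;> omega
    have hexh : ∀ z : ℤ, ∃ N : ℕ, z ∈ Finset.Icc (-(N:ℤ)) N := by
      intro z
      exact ⟨z.natAbs, Finset.mem_Icc.2 (by omega)⟩
    exact hsummable.hasSum.comp (tendsto_atTop_finset_of_monotone hmonoF hexh)
  have htend2 : Tendsto (fun N : ℕ => Λ (-(N:ℤ)-1) - Λ (N:ℤ)) atTop (nhds 1) := by
    have h1 : Tendsto (fun N : ℕ => Λ (-(N:ℤ)-1)) atTop (nhds 1) := by
      apply hbot.comp
      exact tendsto_atBot_add_const_right _ (-1) (tendsto_neg_atBot_iff.2 tendsto_natCast_atTop_atTop)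
    have h2 : Tendsto (fun N : ℕ => Λ (N:ℤ)) atTop (nhds 0) :=
      htop.comp tendsto_natCast_atTop_atTop
    simpa using h1.sub h2
  have : (∑' j : ℤ, (Λ (j-1) - Λ j)) = 1 := by
    apply tendsto_nhds_unique (htend.congr (fun N => (telescope_Icc N))) htend2
  exact this ▸ hsummable.hasSum
end LambdaSum

section Integral
variable {Λ : ℤ → ℝ} (hmono : Antitone Λ)
  (hbot : Filter.Tendsto Λ Filter.atBot (nhds 1))
  (htop : Filter.Tendsto Λ Filter.atTop (nhds 0))

include hmono hbot htop in
lemma integral_kernelOfLambda {x : ℝ} (hx : 0 ≤ x) :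
    (∫ y in Set.Ici (0:ℝ), kernelOfLambda Λ x y) = 1 := by
  set μ := volume.restrict (Set.Ici (0:ℝ)) with hμ
  set a : ℤ → ℝ := fun j => Λ (j-1) - Λ j with ha
  have hann : ∀ j, 0 ≤ a j := fun j => sub_nonneg.2 (hmono (by omega))
  set f : ℤ → ℝ → ℝ := fun j y =>
    a j * ((2:ℝ) ^ j * (if dyadicDist x y ∈ Set.Ioc (0:ℝ) ((2:ℝ) ^ (-j)) then 1 else 0)) with hf
  set g : ℤ → ℝ → ℝ := fun j => (Dint x j \ {x}).indicator (fun _ => a j * (2:ℝ)^j) with hg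
  have hfg : ∀ j, f j =ᵐ[μ] g j := by
    intro j
    rw [hμ]
    refine (MeasureTheory.ae_restrict_iff' measurableSet_Ici).2 ?_
    filter_upwards with y hy
    have hset := Ioc_set_eq hx j
    by_cases hmem : y ∈ Dint x j \ {x}
    · have : y ∈ {y : ℝ | dyadicDist x y ∈ Set.Ioc (0:ℝ) ((2:ℝ)^(-j))} ∩ Set.Ici 0 :=
        hset ▸ hmem
      simp only [Set.mem_inter_iff, Set.mem_setOf_eq] at this
      simp only [hf, hg, Set.indicator_of_mem hmem]
      rw [if_pos this.1]
      ring
    · have : y ∉ {y : ℝ | dyadicDist x y ∈ Set.Ioc (0:ℝ) ((2:ℝ)^(-j))} := by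
        intro hc
        exact hmem (hset ▸ (Set.mem_inter hc hy))
      rw [Set.mem_setOf_eq] at this
      simp only [hf, hg, Set.indicator_of_notMem hmem]
      rw [if_neg this]
      ring
  have hgmeas : ∀ j, StronglyMeasurable (g j) := by
    intro j
    exact (stronglyMeasurable_const).indicator
      ((measurableSet_Dint x j).diff (measurableSet_singleton x))
  have hmeas : ∀ j, AEStronglyMeasurable (f j) μ := fun j =>
    ⟨g j, hgmeas j, hfg j⟩
  have hμDint : ∀ j, μ (Dint x j \ {x}) = ENNReal.ofReal ((2:ℝ)^(-j)) := by
    intro j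
    rw [hμ, Measure.restrict_apply ((measurableSet_Dint x j).diff (measurableSet_singleton x))]
    rw [Set.inter_eq_self_of_subset_left (subset_trans Set.diff_subset (Dint_subset_Ici hx j))]
    exact volume_Dint_diff_singleton hx j
  have hconst : ∀ j, a j * (2:ℝ)^j * (2:ℝ)^(-j) = a j := by
    intro j
    rw [mul_assoc, ← zpow_add₀ (by norm_num : (2:ℝ) ≠ 0)]
    simp
  have hlint : ∀ j, (∫⁻ y, ‖f j y‖₊ ∂μ) = ENNReal.ofReal (a j) := by
    intro j
    have hfg' : (fun y => (‖f j y‖₊ : ENNReal)) =ᵐ[μ] (fun y => (‖g j y‖₊ : ENNReal)) :=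
      (hfg j).mono (fun y hy => by dsimp only; rw [hy])
    rw [lintegral_congr_ae hfg']
    have : ∀ y, ((‖g j y‖₊ : ENNReal)) =
        (Dint x j \ {x}).indicator (fun _ => (ENNReal.ofReal (a j * (2:ℝ)^j))) y := by
      intro y
      by_cases hmem : y ∈ Dint x j \ {x}
      · simp only [hg, Set.indicator_of_mem hmem]
        exact Real.enorm_eq_ofReal (by have := hann j; positivity)
      · simp [hg, Set.indicator_of_notMem hmem]
    rw [lintegral_congr this, lintegral_indicator
      ((measurableSet_Dint x j).diff (measurableSet_singleton x))]
    rw [MeasureTheory.setLIntegral_const, hμDint j,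
      ← ENNReal.ofReal_mul (by have := hann j; positivity)]
    rw [hconst j]
  have hsumΛ : HasSum a 1 := hasSum_Lambda_diff hmono hbot htop
  have hne : (∑' j : ℤ, ∫⁻ y, ‖f j y‖₊ ∂μ) ≠ ⊤ := by
    rw [tsum_congr hlint, ← ENNReal.ofReal_tsum_of_nonneg hann hsumΛ.summable]
    exact ENNReal.ofReal_ne_top
  have hint : ∀ j, (∫ y, f j y ∂μ) = a j := by
    intro j
    rw [integral_congr_ae (hfg j), hg]
    rw [MeasureTheory.integral_indicator_const _
      ((measurableSet_Dint x j).diff (measurableSet_singleton x))]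
    rw [measureReal_def, hμDint j, ENNReal.toReal_ofReal (by positivity), smul_eq_mul]
    rw [mul_comm, hconst j]
  show (∫ y, kernelOfLambda Λ x y ∂μ) = 1
  have hker : ∀ y, kernelOfLambda Λ x y = ∑' j : ℤ, f j y := fun y => rfl
  calc (∫ y, kernelOfLambda Λ x y ∂μ) = ∫ y, (∑' j : ℤ, f j y) ∂μ := by
        exact integral_congr_ae (Filter.Eventually.of_forall (fun y => hker y))
    _ = ∑' j : ℤ, ∫ y, f j y ∂μ := integral_tsum hmeas hne
    _ = ∑' j : ℤ, a j := tsum_congr hint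
    _ = 1 := hsumΛ.tsum_eq
end Integral

/-- witness pair realizing dyadic distance `2^j` : `(0, 2^{j-1})` -/
lemma dyadicDist_witness (j : ℤ) : dyadicDist 0 ((2:ℝ)^(j-1)) = (2:ℝ)^j := by
  have hy : (0:ℝ) < (2:ℝ)^(j-1) := by positivity
  have hne : (0:ℝ) ≠ (2:ℝ)^(j-1) := ne_of_lt hy
  obtain ⟨j₀, hd, hT⟩ := exists_j0 le_rfl (le_of_lt hy) hne
  have hTiff : ∀ J : ℤ, inT 0 ((2:ℝ)^(j-1)) J ↔ J ≤ -j := by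
    intro J
    unfold inT
    rw [mul_zero, Int.floor_zero]
    rw [← zpow_add₀ (by norm_num : (2:ℝ) ≠ 0)]
    constructor
    · intro h
      by_contra hc
      push_neg at hc
      have h1 : (1:ℝ) ≤ (2:ℝ)^(J + (j-1)) := one_le_zpow₀ (by norm_num) (by omega)
      have := Int.le_floor.2 (by exact_mod_cast h1 : ((1:ℤ):ℝ) ≤ (2:ℝ)^(J+(j-1)))
      omega
    · intro h
      symm
      rw [Int.floor_eq_iff]
      constructor
      · push_cast; positivity
      · push_cast
        calc (2:ℝ)^(J + (j-1)) < 2^(0:ℤ) :=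
              zpow_lt_zpow_right₀ (by norm_num) (by omega)
          _ = 0 + 1 := by norm_num
  have hj₀ : j₀ = -j := by
    have h1 : j₀ ≤ -j := (hTiff j₀).1 ((hT j₀).2 le_rfl)
    have h2 : -j ≤ j₀ := (hT (-j)).1 ((hTiff (-j)).2 le_rfl)
    omega
  rw [hd, hj₀]
  norm_num

section Unique
variable {K' : ℝ → ℝ → ℝ} {k' : ℤ → ℝ}
  (hpos : ∀ x y : ℝ, 0 ≤ x → 0 ≤ y → 0 ≤ K' x y)
  (hlevel : ∀ (j : ℤ) (x y : ℝ), 0 ≤ x → 0 ≤ y → dyadicDist x y = (2:ℝ) ^ j → K' x y = k' j)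

include hpos hlevel in
lemma kp_nonneg (m : ℤ) : 0 ≤ k' m := by
  have h := hlevel m 0 ((2:ℝ)^(m-1)) le_rfl (by positivity) (dyadicDist_witness m)
  rw [← h]
  exact hpos _ _ le_rfl (by positivity)

include hpos hlevel in
lemma summable_t {x₀ : ℝ} (hx₀ : 0 ≤ x₀)
    (hint : (∫ y in Set.Ici (0:ℝ), K' x₀ y) = 1) :
    Summable (fun m : ℤ => k' m * (2:ℝ)^(m-1)) := by
  -- integrability
  have hInt : MeasureTheory.IntegrableOn (K' x₀) (Set.Ici (0:ℝ)) := by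
    by_contra hc
    rw [MeasureTheory.integral_undef hc] at hint
    norm_num at hint
  have hnn : 0 ≤ᵐ[volume.restrict (Set.Ici (0:ℝ))] (K' x₀) := by
    refine (MeasureTheory.ae_restrict_iff' measurableSet_Ici).2 ?_
    filter_upwards with y hy
    exact hpos _ _ hx₀ hy
  have hlin : (∫⁻ y in Set.Ici (0:ℝ), ENNReal.ofReal (K' x₀ y)) = 1 := by
    rw [← MeasureTheory.ofReal_integral_eq_lintegral_ofReal hInt hnn, hint,
      ENNReal.ofReal_one]
  -- annuli
  set E : ℤ → Set ℝ := fun l => Dint x₀ l \ Dint x₀ (l+1) with hE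
  have hEmeas : ∀ l, MeasurableSet (E l) :=
    fun l => (measurableSet_Dint _ _).diff (measurableSet_Dint _ _)
  have hEsub : ∀ l, E l ⊆ Set.Ici (0:ℝ) :=
    fun l => subset_trans Set.diff_subset (Dint_subset_Ici hx₀ l)
  have hEdisj : Pairwise (Function.onFun Disjoint E) := by
    intro l l' hll'
    rw [Function.onFun, Set.disjoint_left]
    rintro y ⟨hy1, hy2⟩ ⟨hy1', hy2'⟩
    rcases lt_or_gt_of_ne hll' with h|h
    · exact hy2 (Dint_anti (by omega) hy1')
    · exact hy2' (Dint_anti (by omega) hy1)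
  have hKE : ∀ l : ℤ, ∀ y ∈ E l, K' x₀ y = k' (-l) := by
    intro l y hy
    have : y ∈ {y : ℝ | dyadicDist x₀ y = (2:ℝ)^(-l)} ∩ Set.Ici 0 := by
      rw [level_set_eq hx₀ l]
      exact hy
    exact hlevel (-l) x₀ y hx₀ this.2 this.1
  have hlintE : ∀ l : ℤ, (∫⁻ y in E l, ENNReal.ofReal (K' x₀ y))
      = ENNReal.ofReal (k' (-l)) * ENNReal.ofReal ((2:ℝ)^(-(l+1))) := by
    intro l
    rw [MeasureTheory.setLIntegral_congr_fun (hEmeas l)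
      (fun y hy => by rw [hKE l y hy])]
    rw [MeasureTheory.setLIntegral_const, volume_Dint_diff]
  have hsumle : (∑' l : ℤ, (ENNReal.ofReal (k' (-l)) * ENNReal.ofReal ((2:ℝ)^(-(l+1))))) ≤ 1 := by
    rw [← tsum_congr hlintE, ← MeasureTheory.lintegral_iUnion hEmeas hEdisj]
    rw [← hlin]
    exact MeasureTheory.lintegral_mono_set (Set.iUnion_subset hEsub)
  have hne : (∑' l : ℤ, (ENNReal.ofReal (k' (-l)) * ENNReal.ofReal ((2:ℝ)^(-(l+1))))) ≠ ⊤ :=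
    fun h => by rw [h] at hsumle; exact absurd hsumle (by simp)
  have hsummable : Summable (fun l : ℤ =>
      ((ENNReal.ofReal (k' (-l)) * ENNReal.ofReal ((2:ℝ)^(-(l+1)))).toReal)) :=
    ENNReal.summable_toReal hne
  have heq : ∀ l : ℤ, ((ENNReal.ofReal (k' (-l)) * ENNReal.ofReal ((2:ℝ)^(-(l+1)))).toReal)
      = k' (-l) * (2:ℝ)^(-(l+1)) := by
    intro l
    rw [← ENNReal.ofReal_mul (kp_nonneg hpos hlevel (-l)),
      ENNReal.toReal_ofReal (by have := kp_nonneg hpos hlevel (-l); positivity)]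
  rw [show (fun l : ℤ => ((ENNReal.ofReal (k' (-l)) * ENNReal.ofReal ((2:ℝ)^(-(l+1)))).toReal))
      = fun l : ℤ => k' (-l) * (2:ℝ)^(-(l+1)) from funext heq] at hsummable
  -- reindex by negation
  have hneg := (Equiv.neg ℤ).summable_iff.2 hsummable
  apply hneg.congr
  intro m
  show k' (-(Equiv.neg ℤ m)) * (2:ℝ)^(-((Equiv.neg ℤ m)+1)) = k' m * (2:ℝ)^(m-1)
  simp only [Equiv.neg_apply, neg_neg]
  congr 1
  rw [show (-(-m+1) : ℤ) = m - 1 by ring]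
end Unique

section Unique2
variable {k' : ℤ → ℝ}

lemma summable_alpha (hknn : ∀ m, 0 ≤ k' m)
    (ht : Summable (fun m : ℤ => k' m * (2:ℝ)^(m-1))) : Summable (alphaOf k') := by
  apply Summable.of_abs
  have h1 : Summable (fun l : ℤ => k' (-l) * (2:ℝ)^(-l-1)) := by
    have := ht.comp_injective (neg_injective (G := ℤ))
    apply this.congr
    intro l
    show k' (-l) * (2:ℝ)^(-l-1) = k' (-l) * (2:ℝ)^(-l-1)
    rfl
  have h2 : Summable (fun l : ℤ => k' (-l+1) * (2:ℝ)^((-l+1)-1)) := by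
    have hinj : Function.Injective (fun l : ℤ => -l + 1) := by
      intro a b hab
      simpa using hab
    exact ht.comp_injective hinj
  have hbig : Summable (fun l : ℤ => 2 * (k' (-l) * (2:ℝ)^(-l-1)) + k' (-l+1) * (2:ℝ)^((-l+1)-1)) :=
    (h1.mul_left 2).add h2
  refine Summable.of_nonneg_of_le (fun l => abs_nonneg _) ?_ hbig
  · intro l
    have hb1 : (0:ℝ) ≤ k' (-l) := hknn _
    have hb2 : (0:ℝ) ≤ k' (-l+1) := hknn _
    have h2p : (0:ℝ) < (2:ℝ)^(-l) := by positivity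
    rw [alphaOf, abs_mul, abs_of_pos h2p]
    have habs : |k' (-l) - k' (-l+1)| ≤ k' (-l) + k' (-l+1) :=
      (abs_sub _ _).trans (by rw [abs_of_nonneg hb1, abs_of_nonneg hb2])
    have he1 : (2:ℝ)^(-l) = 2 * (2:ℝ)^(-l-1) := by
      rw [show (-l : ℤ) = (-l-1) + 1 by ring, zpow_add_one₀ (by norm_num : (2:ℝ) ≠ 0)]
      ring
    have he2 : (2:ℝ)^((-l+1)-1 : ℤ) = (2:ℝ)^(-l) := by
      congr 1
      ring
    calc (2:ℝ)^(-l) * |k' (-l) - k' (-l+1)| ≤ (2:ℝ)^(-l) * (k' (-l) + k' (-l+1)) := by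
          exact mul_le_mul_of_nonneg_left habs (le_of_lt h2p)
      _ = 2 * (k' (-l) * (2:ℝ)^(-l-1)) + k' (-l+1) * (2:ℝ)^((-l+1)-1) := by
          rw [he2]
          nlinarith [he1]

lemma Lambda_diff_eq (hα : Summable (alphaOf k')) (j : ℤ) :
    LambdaOf k' (j-1) - LambdaOf k' j = alphaOf k' j := by
  have hs1 : Summable (fun m : ℕ => alphaOf k' (j + m)) := by
    have hinj : Function.Injective (fun m : ℕ => j + (m:ℤ)) := by
      intro a b hab
      simpa using hab
    exact hα.comp_injective hinj
  have e1 : LambdaOf k' (j - 1) = ∑' m : ℕ, alphaOf k' (j + m) := by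
    rw [LambdaOf]
    apply tsum_congr
    intro m
    congr 1
    ring
  have e2 : (∑' m : ℕ, alphaOf k' (j + m))
      = alphaOf k' j + ∑' m : ℕ, alphaOf k' (j + 1 + m) := by
    rw [Summable.tsum_eq_zero_add hs1]
    congr 1
    · congr 1; ring
    · apply tsum_congr
      intro m
      congr 1
      push_cast
      ring
  rw [e1, e2, LambdaOf]
  ring

lemma summable_kp_tail (hknn : ∀ m, 0 ≤ k' m)
    (ht : Summable (fun m : ℤ => k' m * (2:ℝ)^(m-1))) (m₀ : ℤ) :
    Summable (fun n : ℕ => k' (m₀ + n)) := by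
  have hinj : Function.Injective (fun n : ℕ => m₀ + (n:ℤ)) := by
    intro a b hab; simpa using hab
  have h1 : Summable (fun n : ℕ => k' (m₀ + n) * (2:ℝ)^((m₀ + n)-1)) :=
    ht.comp_injective hinj
  have hbig : Summable (fun n : ℕ => (k' (m₀ + n) * (2:ℝ)^((m₀ + (n:ℤ))-1)) * (2:ℝ)^(1-m₀)) :=
    h1.mul_right _
  refine Summable.of_nonneg_of_le (fun n => hknn _) ?_ hbig
  · intro n
    have h2p : (0:ℝ) < (2:ℝ)^((m₀+n)-1 : ℤ) := by positivity
    rw [mul_assoc, ← zpow_add₀ (by norm_num : (2:ℝ) ≠ 0)]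
    have hle : (1:ℝ) ≤ (2:ℝ)^(m₀ + (n:ℤ) - 1 + (1 - m₀)) := one_le_zpow₀ (by norm_num) (by omega)
    calc k' (m₀ + n) = k' (m₀ + n) * 1 := by ring
      _ ≤ k' (m₀ + n) * (2:ℝ)^(m₀ + (n:ℤ) - 1 + (1 - m₀)) :=
          mul_le_mul_of_nonneg_left hle (hknn _)

lemma hasSum_telescope_kp (hknn : ∀ m, 0 ≤ k' m)
    (ht : Summable (fun m : ℤ => k' m * (2:ℝ)^(m-1))) (j₀ : ℤ) :
    HasSum (fun n : ℕ => k' (-j₀ + n) - k' (-j₀ + n + 1)) (k' (-j₀)) := by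
  have hs1 : Summable (fun n : ℕ => k' (-j₀ + n)) := summable_kp_tail hknn ht (-j₀)
  have hs2 : Summable (fun n : ℕ => k' (-j₀ + n + 1)) := by
    apply (summable_kp_tail hknn ht (-j₀ + 1)).congr
    intro n
    congr 1
    ring
  have hg : Summable (fun n : ℕ => k' (-j₀ + n) - k' (-j₀ + n + 1)) := hs1.sub hs2
  have hpart : ∀ N : ℕ, ∑ n ∈ Finset.range N, (k' (-j₀ + n) - k' (-j₀ + n + 1))
      = k' (-j₀) - k' (-j₀ + N) := by
    intro N
    calc ∑ n ∈ Finset.range N, (k' (-j₀+n) - k' (-j₀+n+1))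
        = ∑ n ∈ Finset.range N,
          ((fun n : ℕ => k' (-j₀+n)) n - (fun n : ℕ => k' (-j₀+n)) (n+1)) := by
          apply Finset.sum_congr rfl
          intro n _
          simp only
          congr 2
          push_cast
          ring
      _ = k' (-j₀ + ((0:ℕ):ℤ)) - k' (-j₀ + N) := Finset.sum_range_sub' _ N
      _ = k' (-j₀) - k' (-j₀ + N) := by norm_num
  have hlim0 : Filter.Tendsto (fun N : ℕ => k' (-j₀ + N)) Filter.atTop (nhds 0) :=
    hs1.tendsto_atTop_zero
  have hlim : Filter.Tendsto (fun N : ℕ => ∑ n ∈ Finset.range N,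
      (k' (-j₀ + n) - k' (-j₀ + n + 1))) Filter.atTop (nhds (k' (-j₀))) := by
    have := (tendsto_const_nhds (x := k' (-j₀)) (f := Filter.atTop (α := ℕ))).sub hlim0
    rw [sub_zero] at this
    exact (this.congr (fun N => (hpart N).symm))
  have := hg.hasSum.tendsto_sum_nat
  have heq : (∑' n : ℕ, (k' (-j₀ + n) - k' (-j₀ + n + 1))) = k' (-j₀) :=
    tendsto_nhds_unique this hlim
  exact heq ▸ hg.hasSum
end Unique2

/-- Lemma 4: given a decreasing sequence `Λ_j` with `Λ_j → 1` as `j → -∞` and `Λ_j → 0` as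
`j → +∞`, the kernel `K(x,y) = Σ_j (Λ_{j-1} - Λ_j)·2^j·χ_{(0,2^{-j}]}(δ(x,y))` belongs to `𝒦`
(nonnegative, depending only on `δ`, with unit mass), and it is the unique kernel in `𝒦`
whose associated sequence `Λ_j = Σ_{l>j} 2^{-l}(k_{-l} - k_{-l+1})` is the given one. -/
theorem kernelOfLambda_mem_and_unique (Λ : ℤ → ℝ) (hmono : Antitone Λ)
    (hbot : Filter.Tendsto Λ Filter.atBot (nhds 1))
    (htop : Filter.Tendsto Λ Filter.atTop (nhds 0)) :
    (∀ x y : ℝ, 0 ≤ x → 0 ≤ y → 0 ≤ kernelOfLambda Λ x y) ∧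
      (∀ x y x' y' : ℝ, 0 ≤ x → 0 ≤ y → 0 ≤ x' → 0 ≤ y' →
        dyadicDist x y = dyadicDist x' y' → kernelOfLambda Λ x y = kernelOfLambda Λ x' y') ∧
      (∀ x : ℝ, 0 ≤ x → (∫ y in Set.Ici (0:ℝ), kernelOfLambda Λ x y) = 1) ∧
      (∀ (K' : ℝ → ℝ → ℝ) (k' : ℤ → ℝ),
        (∀ x y : ℝ, 0 ≤ x → 0 ≤ y → 0 ≤ K' x y) →
        (∀ x y x' y' : ℝ, 0 ≤ x → 0 ≤ y → 0 ≤ x' → 0 ≤ y' →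
          dyadicDist x y = dyadicDist x' y' → K' x y = K' x' y') →
        (∃ x₀ : ℝ, 0 ≤ x₀ ∧ (∫ y in Set.Ici (0:ℝ), K' x₀ y) = 1) →
        (∀ (j : ℤ) (x y : ℝ), 0 ≤ x → 0 ≤ y → dyadicDist x y = (2:ℝ) ^ j → K' x y = k' j) →
        (∀ j : ℤ, LambdaOf k' j = Λ j) →
        ∀ x y : ℝ, 0 ≤ x → 0 ≤ y → x ≠ y → K' x y = kernelOfLambda Λ x y) := by
  refine ⟨?_, ?_, ?_, ?_⟩
  · -- nonnegativity
    intro x y hx hy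
    apply tsum_nonneg
    intro j
    have hm : Λ j ≤ Λ (j-1) := hmono (by omega)
    apply mul_nonneg (sub_nonneg.2 hm)
    apply mul_nonneg (by positivity)
    split <;> norm_num
  · -- depends only on δ
    intro x y x' y' _ _ _ _ h
    unfold kernelOfLambda
    rw [h]
  · -- unit mass
    intro x hx
    exact integral_kernelOfLambda hmono hbot htop hx
  · -- uniqueness
    rintro K' k' hpos hdep ⟨x₀, hx₀, hint⟩ hlevel hΛeq x y hx hy hxy
    have hknn : ∀ m, 0 ≤ k' m := kp_nonneg hpos hlevel
    have ht := summable_t hpos hlevel hx₀ hint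
    have hα := summable_alpha hknn ht
    obtain ⟨j₀, hd, hT⟩ := exists_j0 hx hy hxy
    have hKxy : K' x y = k' (-j₀) := hlevel (-j₀) x y hx hy hd
    have hIoc : ∀ j : ℤ, (dyadicDist x y ∈ Set.Ioc (0:ℝ) ((2:ℝ)^(-j))) ↔ j ≤ j₀ := by
      intro j
      rw [dyadicDist_Ioc_iff hx hy j]
      constructor
      · rintro ⟨-, h2⟩
        exact (hT j).1 h2
      · intro h
        exact ⟨hxy, (hT j).2 h⟩
    set F : ℤ → ℝ := fun j => if j ≤ j₀ then k' (-j) - k' (-j+1) else 0 with hF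
    have hterm : ∀ j : ℤ, (Λ (j-1) - Λ j) *
        ((2:ℝ)^j * (if dyadicDist x y ∈ Set.Ioc (0:ℝ) ((2:ℝ)^(-j)) then 1 else 0)) = F j := by
      intro j
      have hdiff : Λ (j-1) - Λ j = alphaOf k' j := by
        rw [← hΛeq (j-1), ← hΛeq j]
        exact Lambda_diff_eq hα j
      have h21 : (2:ℝ)^(-j) * (2:ℝ)^j = 1 := by
        rw [← zpow_add₀ (by norm_num : (2:ℝ) ≠ 0)]
        norm_num
      by_cases hj : j ≤ j₀
      · rw [hF]
        simp only
        rw [if_pos ((hIoc j).2 hj), if_pos hj, hdiff, alphaOf]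
        calc (2:ℝ)^(-j) * (k' (-j) - k' (-j+1)) * ((2:ℝ)^j * 1)
            = ((2:ℝ)^(-j) * (2:ℝ)^j) * (k' (-j) - k' (-j+1)) := by ring
          _ = k' (-j) - k' (-j+1) := by rw [h21, one_mul]
      · rw [hF]
        simp only
        rw [if_neg (fun hc => hj ((hIoc j).1 hc)), if_neg hj]
        ring
    rw [hKxy, kernelOfLambda, tsum_congr hterm]
    have hHS : HasSum (fun n : ℕ => k' (-j₀ + n) - k' (-j₀ + n + 1)) (k' (-j₀)) :=
      hasSum_telescope_kp hknn ht j₀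
    have hinj : Function.Injective (fun n : ℕ => j₀ - (n:ℤ)) := by
      intro a b hab
      simp only at hab
      omega
    have hsupp : ∀ j, j ∉ Set.range (fun n : ℕ => j₀ - (n:ℤ)) → F j = 0 := by
      intro j hj
      rw [hF]
      simp only
      rw [if_neg]
      intro hc
      exact hj ⟨(j₀ - j).toNat, by simp only; omega⟩
    have hFn : ∀ n : ℕ, (F ∘ (fun n : ℕ => j₀ - (n:ℤ))) n = k' (-j₀ + n) - k' (-j₀ + n + 1) := by
      intro n
      show F (j₀ - n) = _
      rw [hF]
      simp only
      rw [if_pos (by omega)]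
      have e1 : -(j₀ - (n:ℤ)) = -j₀ + n := by ring
      rw [e1]

    have hFsum : HasSum F (k' (-j₀)) := by
      refine (Function.Injective.hasSum_iff hinj hsupp).1 ?_
      rw [funext hFn]
      exact hHS
    exact hFsum.tsum_eq.symm
end

section
/- Let K ∈ 𝒦 and 1 ≤ p ≤ ∞. For every f ∈ Lᵖ(ℝ⁺), the integral ∫_{ℝ⁺} K(x,y) f(y) dy converges absolutely for almost every x ∈ ℝ⁺, and the operator Tf(x) = ∫_{ℝ⁺} K(x,y) f(y) dy is non-expansive on Lᵖ(ℝ⁺): ‖Tf‖_p ≤ ‖f‖_p. -/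
open MeasureTheory Set Filter
open scoped ENNReal

namespace KOAux

def same (j : ℤ) (x y : ℝ) : Prop := ⌊x * (2:ℝ) ^ j⌋ = ⌊y * (2:ℝ) ^ j⌋

lemma mem_Ico_iff_floor {j k : ℤ} {x : ℝ} :
    x ∈ Set.Ico ((k : ℝ) * (2:ℝ) ^ (-j)) (((k : ℝ) + 1) * (2:ℝ) ^ (-j)) ↔ ⌊x * (2:ℝ) ^ j⌋ = k := by
  have h2 : (0:ℝ) < (2:ℝ) ^ (j:ℤ) := zpow_pos (by norm_num) _
  have key : ∀ a b : ℝ, a * (2:ℝ)^(-j) ≤ b ↔ a ≤ b * (2:ℝ)^(j:ℤ) := by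
    intro a b
    rw [zpow_neg, mul_comm a, ← div_eq_inv_mul, div_le_iff₀ h2, mul_comm b]
  have key2 : ∀ a b : ℝ, b < a * (2:ℝ)^(-j) ↔ b * (2:ℝ)^(j:ℤ) < a := by
    intro a b
    rw [zpow_neg, mul_comm a, ← div_eq_inv_mul, lt_div_iff₀ h2, mul_comm b]
  rw [Int.floor_eq_iff, Set.mem_Ico, key, key2]

lemma floor_half (a : ℝ) : ⌊a / 2⌋ = ⌊a⌋ / 2 := by
  have hm := Int.floor_le a
  have hm' := Int.lt_floor_add_one a
  set m := ⌊a⌋ with hmdef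
  have hdiv : 2 * (m / 2) ≤ m ∧ m ≤ 2 * (m / 2) + 1 := by omega
  have h1 : ((m / 2 : ℤ) : ℝ) ≤ a / 2 := by
    have : ((2 * (m/2) : ℤ) : ℝ) ≤ (m:ℝ) := by exact_mod_cast hdiv.1
    push_cast at this ⊢
    linarith
  have h2 : a / 2 < (m / 2 : ℤ) + 1 := by
    have : (m:ℝ) ≤ 2 * ((m/2 : ℤ):ℝ) + 1 := by exact_mod_cast hdiv.2
    linarith
  exact Int.floor_eq_iff.mpr ⟨h1, h2⟩

lemma same_step {j : ℤ} {x y : ℝ} (h : same (j+1) x y) : same j x y := by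
  unfold same at *
  have hx : x * (2:ℝ)^j = (x * (2:ℝ)^(j+1)) / 2 := by
    rw [zpow_add_one₀ (by norm_num : (2:ℝ) ≠ 0)]; ring
  have hy : y * (2:ℝ)^j = (y * (2:ℝ)^(j+1)) / 2 := by
    rw [zpow_add_one₀ (by norm_num : (2:ℝ) ≠ 0)]; ring
  rw [hx, hy, floor_half, floor_half, h]

lemma same_mono {i j : ℤ} (hij : i ≤ j) {x y : ℝ} (h : same j x y) : same i x y := by
  obtain ⟨n, rfl⟩ := Int.le.dest hij
  induction n with
  | zero => simpa using h
  | succ m ih =>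
    apply ih (by omega)
    have he : i + (↑(m+1)) = (i + m) + 1 := by push_cast; ring
    exact same_step (he ▸ h)

lemma abs_lt_of_same {j : ℤ} {x y : ℝ} (h : same j x y) : |x - y| < (2:ℝ) ^ (-j) := by
  have h2 : (0:ℝ) < (2:ℝ) ^ (j:ℤ) := zpow_pos (by norm_num) _
  have hx1 := Int.floor_le (x * (2:ℝ)^j)
  have hx2 := Int.lt_floor_add_one (x * (2:ℝ)^j)
  have hy1 := Int.floor_le (y * (2:ℝ)^j)
  have hy2 := Int.lt_floor_add_one (y * (2:ℝ)^j)
  rw [h] at hx1 hx2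
  have hd : |(x - y) * (2:ℝ)^(j:ℤ)| < 1 := by
    rw [abs_lt]
    constructor <;> nlinarith
  rw [abs_mul, abs_of_pos h2] at hd
  rw [zpow_neg, ← one_div, lt_div_iff₀ h2]
  exact hd

lemma bdd_of_ne {x y : ℝ} (hxy : x ≠ y) : ∃ N : ℤ, ∀ j : ℤ, same j x y → j ≤ N := by
  obtain ⟨n, hn⟩ := pow_unbounded_of_one_lt (|x - y|⁻¹) (by norm_num : (1:ℝ) < 2)
  refine ⟨n, fun j hj => ?_⟩
  by_contra hlt
  push_neg at hlt
  have habs : (0:ℝ) < |x - y| := abs_pos.mpr (sub_ne_zero.mpr hxy)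
  have h1 : |x - y| < (2:ℝ)^(-j) := abs_lt_of_same hj
  have h2 : (2:ℝ)^(-j) ≤ (2:ℝ)^(-(n:ℤ)) := by
    apply zpow_le_zpow_right₀ (by norm_num) (by omega)
  have h3 : (2:ℝ)^(-(n:ℤ)) = ((2:ℝ)^n)⁻¹ := by
    rw [zpow_neg]; norm_cast
  have h4 : |x - y|⁻¹ < (2:ℝ)^n := hn
  have h5 : ((2:ℝ)^n)⁻¹ < |x - y| := by
    rw [inv_lt_comm₀ (by positivity) habs]
    exact h4
  linarith [h1, h2, h3 ▸ h2]

lemma exists_same {x y : ℝ} (hx : 0 ≤ x) (hy : 0 ≤ y) : ∃ j : ℤ, same j x y := by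
  obtain ⟨n, hn⟩ := pow_unbounded_of_one_lt (max x y) (by norm_num : (1:ℝ) < 2)
  refine ⟨-n, ?_⟩
  have hp : (0:ℝ) < (2:ℝ)^(n:ℤ) := zpow_pos (by norm_num) _
  have key : ∀ z : ℝ, 0 ≤ z → z < (2:ℝ)^n → ⌊z * (2:ℝ)^(-(n:ℤ))⌋ = 0 := by
    intro z hz hzlt
    apply Int.floor_eq_iff.mpr
    constructor
    · push_cast; positivity
    · push_cast
      rw [zero_add, zpow_neg, mul_comm, ← div_eq_inv_mul, div_lt_one hp]
      calc z < (2:ℝ)^n := hzlt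
        _ = (2:ℝ)^(n:ℤ) := by norm_cast
  unfold same
  rw [key x hx (lt_of_le_of_lt (le_max_left x y) hn),
      key y hy (lt_of_le_of_lt (le_max_right x y) hn)]

lemma exists_greatest {x y : ℝ} (hx : 0 ≤ x) (hy : 0 ≤ y) (hxy : x ≠ y) :
    ∃ j : ℤ, same j x y ∧ ∀ i : ℤ, same i x y → i ≤ j := by
  obtain ⟨N, hN⟩ := bdd_of_ne hxy
  obtain ⟨j, hj1, hj2⟩ := Int.exists_greatest_of_bdd ⟨N, fun z hz => hN z hz⟩
    ((exists_same hx hy).imp fun j h => h)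
  exact ⟨j, hj1, hj2⟩

/-- The greatest level at which `x` and `y` share a dyadic cell. -/
noncomputable def lev (x y : ℝ) : ℤ :=
  if h : 0 ≤ x ∧ 0 ≤ y ∧ x ≠ y then (exists_greatest h.1 h.2.1 h.2.2).choose else 0

lemma lev_spec {x y : ℝ} (hx : 0 ≤ x) (hy : 0 ≤ y) (hxy : x ≠ y) :
    same (lev x y) x y ∧ ∀ i : ℤ, same i x y → i ≤ lev x y := by
  rw [lev, dif_pos ⟨hx, hy, hxy⟩]
  exact (exists_greatest hx hy hxy).choose_spec

lemma lev_eq_iff {x y : ℝ} (hx : 0 ≤ x) (hy : 0 ≤ y) (hxy : x ≠ y) {j : ℤ} :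
    lev x y = j ↔ (same j x y ∧ ¬ same (j+1) x y) := by
  obtain ⟨h1, h2⟩ := lev_spec hx hy hxy
  constructor
  · rintro rfl
    refine ⟨h1, fun hc => ?_⟩
    exact absurd (h2 _ hc) (by omega)
  · rintro ⟨hs, hns⟩
    have hle : j ≤ lev x y := h2 _ hs
    rcases eq_or_lt_of_le hle with h | h
    · exact h.symm
    · exact absurd (same_mono (by omega) h1) hns

lemma dyadicDist_eq {x y : ℝ} (hx : 0 ≤ x) (hy : 0 ≤ y) (hxy : x ≠ y) :
    dyadicDist x y = (2:ℝ) ^ (-(lev x y)) := by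
  obtain ⟨h1, h2⟩ := lev_spec hx hy hxy
  rw [dyadicDist, if_neg hxy]
  apply IsLeast.csInf_eq
  constructor
  · refine ⟨lev x y, ⌊x * (2:ℝ)^(lev x y)⌋.toNat, rfl, ?_, ?_⟩
    · rw [show ((⌊x * (2:ℝ)^(lev x y)⌋.toNat : ℕ) : ℝ) = ((⌊x * (2:ℝ)^(lev x y)⌋ : ℤ) : ℝ) by
        norm_cast
        exact Int.toNat_of_nonneg (Int.floor_nonneg.mpr (by positivity))]
      exact mem_Ico_iff_floor.mpr rfl
    · rw [show ((⌊x * (2:ℝ)^(lev x y)⌋.toNat : ℕ) : ℝ) = ((⌊x * (2:ℝ)^(lev x y)⌋ : ℤ) : ℝ) by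
        norm_cast
        exact Int.toNat_of_nonneg (Int.floor_nonneg.mpr (by positivity))]
      exact mem_Ico_iff_floor.mpr h1.symm
  · rintro r ⟨j, k, rfl, hxm, hym⟩
    have hs : same j x y := by
      have h1' := mem_Ico_iff_floor (j := j) (k := (k:ℤ)) (x := x)
      have h2' := mem_Ico_iff_floor (j := j) (k := (k:ℤ)) (x := y)
      push_cast at h1' h2'
      unfold same
      rw [h1'.mp hxm, h2'.mp hym]
    have := h2 j hs
    exact zpow_le_zpow_right₀ (by norm_num) (by omega)

/-- The level-`j` dyadic cell containing `x`. -/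
def D (j : ℤ) (x : ℝ) : Set ℝ :=
  Set.Ico (((⌊x * (2:ℝ)^j⌋ : ℤ) : ℝ) * (2:ℝ)^(-j)) ((((⌊x * (2:ℝ)^j⌋ : ℤ) : ℝ) + 1) * (2:ℝ)^(-j))

lemma mem_D_iff {j : ℤ} {x y : ℝ} : y ∈ D j x ↔ same j x y :=
  mem_Ico_iff_floor.trans eq_comm

lemma measurableSet_D (j : ℤ) (x : ℝ) : MeasurableSet (D j x) := measurableSet_Ico

lemma volume_D (j : ℤ) (x : ℝ) : volume (D j x) = ENNReal.ofReal ((2:ℝ)^(-j)) := by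
  rw [D, Real.volume_Ico]
  congr 1
  ring

lemma self_mem_D (j : ℤ) (x : ℝ) : x ∈ D j x := mem_D_iff.mpr rfl

lemma D_succ_subset (j : ℤ) (x : ℝ) : D (j+1) x ⊆ D j x := fun _ hy =>
  mem_D_iff.mpr (same_step (mem_D_iff.mp hy))

lemma nonneg_of_mem_D {j : ℤ} {x y : ℝ} (hx : 0 ≤ x) (hy : y ∈ D j x) : 0 ≤ y := by
  refine le_trans ?_ hy.1
  have : (0:ℤ) ≤ ⌊x * (2:ℝ)^j⌋ := Int.floor_nonneg.mpr (by positivity)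
  have h2 : (0:ℝ) < (2:ℝ)^(-j : ℤ) := zpow_pos (by norm_num) _
  have : (0:ℝ) ≤ ((⌊x * (2:ℝ)^j⌋ : ℤ) : ℝ) := by exact_mod_cast this
  positivity

/-- The level-`j` dyadic shell around `x`. -/
def S (j : ℤ) (x : ℝ) : Set ℝ := D j x \ D (j+1) x

lemma measurableSet_S (j : ℤ) (x : ℝ) : MeasurableSet (S j x) :=
  (measurableSet_D j x).diff (measurableSet_D (j+1) x)

lemma volume_S (j : ℤ) (x : ℝ) : volume (S j x) = ENNReal.ofReal ((2:ℝ)^(-(j+1))) := by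
  have hsub := D_succ_subset j x
  have hzp : (0:ℝ) < (2:ℝ)^(-(j+1) : ℤ) := zpow_pos (by norm_num) _
  have hhalf : (2:ℝ)^(-j : ℤ) = (2:ℝ)^(-(j+1) : ℤ) * 2 := by
    rw [← zpow_add_one₀ (by norm_num : (2:ℝ) ≠ 0)]
    congr 1
    ring
  rw [S, measure_diff hsub (measurableSet_D (j+1) x).nullMeasurableSet
    (by rw [volume_D]; exact ENNReal.ofReal_ne_top),
    volume_D, volume_D, ← ENNReal.ofReal_sub _ (le_of_lt hzp)]
  congr 1
  rw [hhalf]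
  ring

lemma mem_S_iff {j : ℤ} {x y : ℝ} (hx : 0 ≤ x) :
    y ∈ S j x ↔ 0 ≤ y ∧ x ≠ y ∧ lev x y = j := by
  constructor
  · rintro ⟨h1, h2⟩
    have hy : 0 ≤ y := nonneg_of_mem_D hx h1
    have hxy : x ≠ y := by
      rintro rfl
      exact h2 (self_mem_D _ _)
    refine ⟨hy, hxy, (lev_eq_iff hx hy hxy).mpr ⟨mem_D_iff.mp h1, fun hc => h2 (mem_D_iff.mpr hc)⟩⟩
  · rintro ⟨hy, hxy, hlev⟩
    obtain ⟨h1, h2⟩ := (lev_eq_iff hx hy hxy).mp hlev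
    exact ⟨mem_D_iff.mpr h1, fun hc => h2 (mem_D_iff.mp hc)⟩

lemma partition (x : ℝ) (hx : 0 ≤ x) : Set.Ici (0:ℝ) \ {x} = ⋃ j : ℤ, S j x := by
  ext y
  simp only [Set.mem_diff, Set.mem_Ici, Set.mem_singleton_iff, Set.mem_iUnion]
  constructor
  · rintro ⟨hy, hne⟩
    exact ⟨lev x y, (mem_S_iff hx).mpr ⟨hy, fun h => hne h.symm, rfl⟩⟩
  · rintro ⟨j, hj⟩
    obtain ⟨hy, hxy, -⟩ := (mem_S_iff hx).mp hj
    exact ⟨hy, fun h => hxy h.symm⟩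

lemma S_disjoint (x : ℝ) (hx : 0 ≤ x) : Pairwise (Function.onFun Disjoint fun j => S j x) := by
  intro i j hij
  refine Set.disjoint_left.mpr fun y hyi hyj => ?_
  obtain ⟨-, -, hi⟩ := (mem_S_iff hx).mp hyi
  obtain ⟨-, -, hj⟩ := (mem_S_iff hx).mp hyj
  exact hij (hi.symm.trans hj)

lemma S_nonempty (j : ℤ) (x : ℝ) : (S j x).Nonempty := by
  apply MeasureTheory.nonempty_of_measure_ne_zero (μ := volume)
  rw [volume_S]
  simp only [ne_eq, ENNReal.ofReal_eq_zero, not_le]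
  positivity

/-- A chosen point in the level-`j` shell around `x`. -/
noncomputable def wit (j : ℤ) (x : ℝ) : ℝ := (S_nonempty j x).choose

lemma wit_mem (j : ℤ) (x : ℝ) : wit j x ∈ S j x := (S_nonempty j x).choose_spec

section Kernel

variable {K : ℝ → ℝ → ℝ} {x₀ : ℝ}

lemma K_eq_wit
    (hKdist : ∀ x y x' y' : ℝ, 0 ≤ x → 0 ≤ y → 0 ≤ x' → 0 ≤ y' →
      dyadicDist x y = dyadicDist x' y' → K x y = K x' y') (hx₀ : 0 ≤ x₀)
    {x y : ℝ} (hx : 0 ≤ x) (hy : 0 ≤ y) (hxy : x ≠ y) :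
    K x y = K x₀ (wit (lev x y) x₀) := by
  have hw := wit_mem (lev x y) x₀
  obtain ⟨hw0, hwne, hwlev⟩ := (mem_S_iff hx₀).mp hw
  apply hKdist x y x₀ (wit (lev x y) x₀) hx hy hx₀ hw0
  rw [dyadicDist_eq hx hy hxy, dyadicDist_eq hx₀ hw0 hwne, hwlev]

/-- The set of pairs whose dyadic separation level is exactly `j`. -/
def Aset (j : ℤ) : Set (ℝ × ℝ) := {p | same j p.1 p.2 ∧ ¬ same (j+1) p.1 p.2}

lemma measurableSet_sameSet (j : ℤ) : MeasurableSet {p : ℝ × ℝ | same j p.1 p.2} := by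
  have h1 : Measurable fun p : ℝ × ℝ => ⌊p.1 * (2:ℝ)^j⌋ := (measurable_fst.mul_const _).floor
  have h2 : Measurable fun p : ℝ × ℝ => ⌊p.2 * (2:ℝ)^j⌋ := (measurable_snd.mul_const _).floor
  have : {p : ℝ × ℝ | same j p.1 p.2}
      = ⋃ n : ℤ, ((fun p : ℝ × ℝ => ⌊p.1 * (2:ℝ)^j⌋) ⁻¹' {n}) ∩
        ((fun p : ℝ × ℝ => ⌊p.2 * (2:ℝ)^j⌋) ⁻¹' {n}) := by
    ext p
    simp only [Set.mem_setOf_eq, Set.mem_iUnion, Set.mem_inter_iff, Set.mem_preimage,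
      Set.mem_singleton_iff, same]
    exact ⟨fun h => ⟨_, rfl, h.symm⟩, fun ⟨n, h1', h2'⟩ => h1'.trans h2'.symm⟩
  rw [this]
  exact MeasurableSet.iUnion fun n => (h1 (measurableSet_singleton n)).inter
    (h2 (measurableSet_singleton n))

lemma measurableSet_Aset (j : ℤ) : MeasurableSet (Aset j) :=
  (measurableSet_sameSet j).diff (measurableSet_sameSet (j+1))

lemma mem_Aset_iff {j : ℤ} {x y : ℝ} (hx : 0 ≤ x) (hy : 0 ≤ y) (hxy : x ≠ y) :
    (x, y) ∈ Aset j ↔ lev x y = j := (lev_eq_iff hx hy hxy).symm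

/-- The `ℝ≥0∞`-valued jointly measurable version of the kernel. -/
noncomputable def kk (K : ℝ → ℝ → ℝ) (x₀ : ℝ) : ℝ × ℝ → ℝ≥0∞ :=
  fun p => ∑' j : ℤ, (Aset j).indicator (fun _ => ENNReal.ofReal (K x₀ (wit j x₀))) p

lemma measurable_kk (K : ℝ → ℝ → ℝ) (x₀ : ℝ) : Measurable (kk K x₀) :=
  Measurable.ennreal_tsum fun j => measurable_const.indicator (measurableSet_Aset j)

lemma kk_eq
    (hKdist : ∀ x y x' y' : ℝ, 0 ≤ x → 0 ≤ y → 0 ≤ x' → 0 ≤ y' →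
      dyadicDist x y = dyadicDist x' y' → K x y = K x' y') (hx₀ : 0 ≤ x₀)
    {x y : ℝ} (hx : 0 ≤ x) (hy : 0 ≤ y) (hxy : x ≠ y) :
    kk K x₀ (x, y) = ENNReal.ofReal (K x y) := by
  rw [kk, tsum_eq_single (lev x y) (fun j hne => Set.indicator_of_notMem
    (fun hc => hne ((mem_Aset_iff hx hy hxy).mp hc).symm) _)]
  rw [Set.indicator_of_mem ((mem_Aset_iff hx hy hxy).mpr rfl)]
  rw [K_eq_wit hKdist hx₀ hx hy hxy]

lemma kk_symm (K : ℝ → ℝ → ℝ) (x₀ : ℝ) (x y : ℝ) : kk K x₀ (x, y) = kk K x₀ (y, x) := by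
  unfold kk
  apply tsum_congr
  intro j
  have hiff : (x, y) ∈ Aset j ↔ (y, x) ∈ Aset j := by
    unfold Aset same
    constructor <;> rintro ⟨h1, h2⟩ <;> exact ⟨h1.symm, fun hc => h2 hc.symm⟩
  by_cases h : (x, y) ∈ Aset j
  · rw [Set.indicator_of_mem h, Set.indicator_of_mem (hiff.mp h)]
  · rw [Set.indicator_of_notMem h, Set.indicator_of_notMem (fun hc => h (hiff.mpr hc))]

lemma lint_shell
    (hKdist : ∀ x y x' y' : ℝ, 0 ≤ x → 0 ≤ y → 0 ≤ x' → 0 ≤ y' →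
      dyadicDist x y = dyadicDist x' y' → K x y = K x' y') (hx₀ : 0 ≤ x₀)
    {x : ℝ} (hx : 0 ≤ x) (j : ℤ) :
    ∫⁻ y in S j x, kk K x₀ (x, y) =
      ENNReal.ofReal (K x₀ (wit j x₀)) * ENNReal.ofReal ((2:ℝ)^(-(j+1))) := by
  have hpt : ∀ᵐ y ∂volume, y ∈ S j x →
      kk K x₀ (x, y) = (fun _ : ℝ => ENNReal.ofReal (K x₀ (wit j x₀))) y := by
    refine ae_of_all _ fun y hy => ?_
    obtain ⟨hy0, hxy, hlev⟩ := (mem_S_iff hx).mp hy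
    rw [kk_eq hKdist hx₀ hx hy0 hxy, K_eq_wit hKdist hx₀ hx hy0 hxy, hlev]
  rw [setLIntegral_congr_fun_ae (measurableSet_S j x) hpt, setLIntegral_const, volume_S]

lemma lint_row
    (hKdist : ∀ x y x' y' : ℝ, 0 ≤ x → 0 ≤ y → 0 ≤ x' → 0 ≤ y' →
      dyadicDist x y = dyadicDist x' y' → K x y = K x' y') (hx₀ : 0 ≤ x₀)
    {x : ℝ} (hx : 0 ≤ x) :
    ∫⁻ y in Set.Ici (0:ℝ), kk K x₀ (x, y) =
      ∑' j : ℤ, ENNReal.ofReal (K x₀ (wit j x₀)) * ENNReal.ofReal ((2:ℝ)^(-(j+1))) := by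
  have hrest : (Set.Ici (0:ℝ) : Set ℝ) =ᵐ[volume] (Set.Ici (0:ℝ) \ {x} : Set ℝ) := by
    refine (diff_ae_eq_self.mpr ?_).symm
    exact measure_mono_null Set.inter_subset_right (Real.volume_singleton)
  calc ∫⁻ y in Set.Ici (0:ℝ), kk K x₀ (x, y)
      = ∫⁻ y in Set.Ici (0:ℝ) \ {x}, kk K x₀ (x, y) := by
        rw [Measure.restrict_congr_set hrest]
    _ = ∫⁻ y in ⋃ j : ℤ, S j x, kk K x₀ (x, y) := by rw [partition x hx]
    _ = ∑' j : ℤ, ∫⁻ y in S j x, kk K x₀ (x, y) :=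
        lintegral_iUnion (fun j => measurableSet_S j x) (S_disjoint x hx) _
    _ = _ := tsum_congr fun j => lint_shell hKdist hx₀ hx j

lemma ae_ne (x : ℝ) : ∀ᵐ y ∂(volume.restrict (Set.Ici (0:ℝ))), y ≠ x := by
  refine ae_restrict_of_ae ?_
  rw [ae_iff]
  convert Real.volume_singleton (a := x) using 2
  ext y
  simp

lemma lint_row_x₀
    (hK0 : ∀ x y : ℝ, 0 ≤ x → 0 ≤ y → 0 ≤ K x y)
    (hKdist : ∀ x y x' y' : ℝ, 0 ≤ x → 0 ≤ y → 0 ≤ x' → 0 ≤ y' →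
      dyadicDist x y = dyadicDist x' y' → K x y = K x' y') (hx₀ : 0 ≤ x₀)
    (hKnorm : (∫ y in Set.Ici (0:ℝ), K x₀ y) = 1) :
    ∫⁻ y in Set.Ici (0:ℝ), kk K x₀ (x₀, y) = 1 := by
  have h1 : ∀ᵐ y ∂(volume.restrict (Set.Ici (0:ℝ))), y ∈ Set.Ici (0:ℝ) :=
    ae_restrict_mem measurableSet_Ici
  have hae : ∀ᵐ y ∂(volume.restrict (Set.Ici (0:ℝ))), kk K x₀ (x₀, y) = ENNReal.ofReal (K x₀ y) := by
    filter_upwards [h1, ae_ne x₀] with y hy hne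
    exact kk_eq hKdist hx₀ hx₀ hy (Ne.symm hne)
  rw [lintegral_congr_ae hae]
  have hms : AEStronglyMeasurable (fun y => K x₀ y) (volume.restrict (Set.Ici (0:ℝ))) := by
    have hmeas : Measurable fun y => (kk K x₀ (x₀, y)).toReal :=
      ((measurable_kk K x₀).comp measurable_prodMk_left).ennreal_toReal
    refine hmeas.aestronglyMeasurable.congr ?_
    filter_upwards [h1, ae_ne x₀] with y hy hne
    rw [kk_eq hKdist hx₀ hx₀ hy (Ne.symm hne), ENNReal.toReal_ofReal (hK0 x₀ y hx₀ hy)]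
  have hnn : 0 ≤ᵐ[volume.restrict (Set.Ici (0:ℝ))] fun y => K x₀ y := by
    filter_upwards [h1] with y hy using hK0 x₀ y hx₀ hy
  have heq := MeasureTheory.integral_eq_lintegral_of_nonneg_ae hnn hms
  rw [hKnorm] at heq
  exact (ENNReal.toReal_eq_one_iff _).mp heq.symm

lemma lint_row_one
    (hK0 : ∀ x y : ℝ, 0 ≤ x → 0 ≤ y → 0 ≤ K x y)
    (hKdist : ∀ x y x' y' : ℝ, 0 ≤ x → 0 ≤ y → 0 ≤ x' → 0 ≤ y' →
      dyadicDist x y = dyadicDist x' y' → K x y = K x' y') (hx₀ : 0 ≤ x₀)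
    (hKnorm : (∫ y in Set.Ici (0:ℝ), K x₀ y) = 1)
    {x : ℝ} (hx : 0 ≤ x) :
    ∫⁻ y in Set.Ici (0:ℝ), kk K x₀ (x, y) = 1 := by
  rw [lint_row hKdist hx₀ hx, ← lint_row hKdist hx₀ hx₀,
    lint_row_x₀ hK0 hKdist hx₀ hKnorm]

lemma lint_col_one
    (hK0 : ∀ x y : ℝ, 0 ≤ x → 0 ≤ y → 0 ≤ K x y)
    (hKdist : ∀ x y x' y' : ℝ, 0 ≤ x → 0 ≤ y → 0 ≤ x' → 0 ≤ y' →
      dyadicDist x y = dyadicDist x' y' → K x y = K x' y') (hx₀ : 0 ≤ x₀)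
    (hKnorm : (∫ y in Set.Ici (0:ℝ), K x₀ y) = 1)
    {y : ℝ} (hy : 0 ≤ y) :
    ∫⁻ x in Set.Ici (0:ℝ), kk K x₀ (x, y) = 1 := by
  calc ∫⁻ x in Set.Ici (0:ℝ), kk K x₀ (x, y) = ∫⁻ x in Set.Ici (0:ℝ), kk K x₀ (y, x) :=
        lintegral_congr fun x => kk_symm K x₀ x y
    _ = 1 := lint_row_one hK0 hKdist hx₀ hKnorm hy

end Kernel

end KOAux


/-- Lemma 5: for `K ∈ 𝒦` and `f ∈ Lᵖ(ℝ⁺)`, `1 ≤ p ≤ ∞`, the integral `∫ K(x,y) f(y) dy`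
converges absolutely for almost every `x ∈ ℝ⁺`, and `Tf(x) = ∫ K(x,y) f(y) dy` is
non-expansive: `‖Tf‖_p ≤ ‖f‖_p`. -/
theorem kernel_operator_nonexpansive (K : ℝ → ℝ → ℝ)
    (hK0 : ∀ x y : ℝ, 0 ≤ x → 0 ≤ y → 0 ≤ K x y)
    (hKdist : ∀ x y x' y' : ℝ, 0 ≤ x → 0 ≤ y → 0 ≤ x' → 0 ≤ y' →
      dyadicDist x y = dyadicDist x' y' → K x y = K x' y')
    (x₀ : ℝ) (hx₀ : 0 ≤ x₀)
    (hKnorm : (∫ y in Set.Ici (0:ℝ), K x₀ y) = 1)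
    (p : ℝ≥0∞) (hp : 1 ≤ p) (f : ℝ → ℝ)
    (hf : MeasureTheory.MemLp f p (MeasureTheory.volume.restrict (Set.Ici (0:ℝ)))) :
    (∀ᵐ x ∂(MeasureTheory.volume.restrict (Set.Ici (0:ℝ))),
        MeasureTheory.Integrable (fun y => K x y * f y)
          (MeasureTheory.volume.restrict (Set.Ici (0:ℝ)))) ∧
      MeasureTheory.eLpNorm
          (fun x => ∫ y in Set.Ici (0:ℝ), K x y * f y) p
          (MeasureTheory.volume.restrict (Set.Ici (0:ℝ))) ≤
        MeasureTheory.eLpNorm f p (MeasureTheory.volume.restrict (Set.Ici (0:ℝ))) := by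
  classical
  have hmem : ∀ᵐ x ∂(volume.restrict (Set.Ici (0:ℝ))), x ∈ Set.Ici (0:ℝ) :=
    ae_restrict_mem measurableSet_Ici
  set κ := KOAux.kk K x₀ with hκdef
  have hκmeas : Measurable κ := KOAux.measurable_kk K x₀
  have kkE : ∀ {x y : ℝ}, 0 ≤ x → 0 ≤ y → x ≠ y → κ (x, y) = ENNReal.ofReal (K x y) :=
    fun hx hy hxy => KOAux.kk_eq hKdist hx₀ hx hy hxy
  have hrow : ∀ {x : ℝ}, 0 ≤ x → ∫⁻ y in Set.Ici (0:ℝ), κ (x, y) = 1 :=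
    fun hx => KOAux.lint_row_one hK0 hKdist hx₀ hKnorm hx
  have hcol : ∀ {y : ℝ}, 0 ≤ y → ∫⁻ x in Set.Ici (0:ℝ), κ (x, y) = 1 :=
    fun hy => KOAux.lint_col_one hK0 hKdist hx₀ hKnorm hy
  set F : ℝ → ℝ≥0∞ := fun y => (‖f y‖₊ : ℝ≥0∞) with hFdef
  have hFmeas : AEMeasurable F (volume.restrict (Set.Ici (0:ℝ))) := hf.1.enorm
  have hptwise : ∀ x : ℝ, 0 ≤ x →
      ∀ᵐ y ∂(volume.restrict (Set.Ici (0:ℝ))), (‖K x y * f y‖₊ : ℝ≥0∞) = κ (x, y) * F y := by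
    intro x hx
    filter_upwards [hmem, KOAux.ae_ne x] with y hy hne
    rw [nnnorm_mul, ENNReal.coe_mul, kkE hx hy (Ne.symm hne), ← enorm_eq_nnnorm,
      Real.enorm_eq_ofReal (hK0 x y hx hy)]
  have hslicemeas : ∀ x : ℝ, 0 ≤ x →
      AEStronglyMeasurable (fun y => K x y * f y) (volume.restrict (Set.Ici (0:ℝ))) := by
    intro x hx
    have hmeas : Measurable fun y => (κ (x, y)).toReal :=
      (hκmeas.comp measurable_prodMk_left).ennreal_toReal
    have hKx : AEStronglyMeasurable (fun y => K x y) (volume.restrict (Set.Ici (0:ℝ))) := by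
      refine hmeas.aestronglyMeasurable.congr ?_
      filter_upwards [hmem, KOAux.ae_ne x] with y hy hne
      rw [kkE hx hy (Ne.symm hne), ENNReal.toReal_ofReal (hK0 x y hx hy)]
    exact hKx.mul hf.1
  have hG : ∀ x : ℝ, 0 ≤ x →
      ∫⁻ y in Set.Ici (0:ℝ), (‖K x y * f y‖₊ : ℝ≥0∞) = ∫⁻ y in Set.Ici (0:ℝ), κ (x, y) * F y :=
    fun x hx => lintegral_congr_ae (hptwise x hx)
  have hκslice : ∀ x : ℝ, AEMeasurable (fun y => κ (x, y)) (volume.restrict (Set.Ici (0:ℝ))) :=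
    fun x => (hκmeas.comp measurable_prodMk_left).aemeasurable
  by_cases hptop : p = ⊤
  · subst hptop
    set C := eLpNormEssSup f (volume.restrict (Set.Ici (0:ℝ))) with hCdef
    have hCfin : C < ⊤ := by
      have h2 := hf.2
      rwa [eLpNorm_exponent_top] at h2
    have hfb : ∀ᵐ y ∂(volume.restrict (Set.Ici (0:ℝ))), F y ≤ C :=
      enorm_ae_le_eLpNormEssSup f _
    have hGle : ∀ x : ℝ, 0 ≤ x → ∫⁻ y in Set.Ici (0:ℝ), κ (x, y) * F y ≤ C := by
      intro x hx
      calc ∫⁻ y in Set.Ici (0:ℝ), κ (x, y) * F y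
          ≤ ∫⁻ y in Set.Ici (0:ℝ), κ (x, y) * C := by
            refine lintegral_mono_ae ?_
            filter_upwards [hfb] with y hy
            exact mul_le_mul_right hy _
        _ = (∫⁻ y in Set.Ici (0:ℝ), κ (x, y)) * C := lintegral_mul_const'' C (hκslice x)
        _ = C := by rw [hrow hx, one_mul]
    constructor
    · filter_upwards [hmem] with x hx
      refine ⟨hslicemeas x hx, ?_⟩
      have hfi : (∫⁻ y in Set.Ici (0:ℝ), (‖K x y * f y‖₊ : ℝ≥0∞)) < ⊤ := by
        rw [hG x hx]
        exact lt_of_le_of_lt (hGle x hx) hCfin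
      exact hfi
    · rw [eLpNorm_exponent_top, eLpNorm_exponent_top]
      have hb : eLpNormEssSup (fun x => ∫ y in Set.Ici (0:ℝ), K x y * f y)
          (volume.restrict (Set.Ici (0:ℝ))) ≤ C := by
        refine essSup_le_of_ae_le C ?_
        filter_upwards [hmem] with x hx
        calc (‖∫ y in Set.Ici (0:ℝ), K x y * f y‖₊ : ℝ≥0∞)
            ≤ ∫⁻ y in Set.Ici (0:ℝ), (‖K x y * f y‖₊ : ℝ≥0∞) :=
              enorm_integral_le_lintegral_enorm _
          _ = ∫⁻ y in Set.Ici (0:ℝ), κ (x, y) * F y := hG x hx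
          _ ≤ C := hGle x hx
      exact hb
  · have hp0 : p ≠ 0 := by
      intro h
      rw [h] at hp
      simp at hp
    set r := p.toReal with hrdef
    have hr1 : 1 ≤ r := by
      have h := ENNReal.toReal_mono hptop hp
      simpa using h
    have hr0 : (0:ℝ) < r := lt_of_lt_of_le one_pos hr1
    have hjensen : ∀ x : ℝ, 0 ≤ x →
        (∫⁻ y in Set.Ici (0:ℝ), κ (x, y) * F y) ^ r
          ≤ ∫⁻ y in Set.Ici (0:ℝ), κ (x, y) * F y ^ r := by
      intro x hx
      rcases eq_or_lt_of_le hr1 with h1 | h1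
      · simp only [← h1, ENNReal.rpow_one]
        exact le_rfl
      · set q := Real.conjExponent r with hqdef
        have hqr' : q.HolderConjugate r := (Real.HolderConjugate.conjExponent h1).symm
        have hhold := ENNReal.lintegral_mul_le_Lp_mul_Lq (volume.restrict (Set.Ici (0:ℝ))) hqr'
          (f := fun y => (κ (x, y)) ^ (1/q)) (g := fun y => (κ (x, y)) ^ (1/r) * F y)
          ((hκslice x).pow aemeasurable_const)
          (((hκslice x).pow aemeasurable_const).mul hFmeas)
        simp only [Pi.mul_apply] at hhold
        have e1 : ∫⁻ a in Set.Ici (0:ℝ), (κ (x, a)) ^ (1/q) * ((κ (x, a)) ^ (1/r) * F a)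
            = ∫⁻ a in Set.Ici (0:ℝ), κ (x, a) * F a := by
          refine lintegral_congr fun a => ?_
          rw [← mul_assoc, ← ENNReal.rpow_add_of_nonneg _ _ hqr'.one_div_nonneg
            (by positivity)]
          rw [show (1:ℝ)/q + 1/r = 1 by
            have h2 := hqr'.inv_add_inv_eq_one
            rw [one_div, one_div]
            linarith]
          rw [ENNReal.rpow_one]
        have e2 : ∫⁻ a in Set.Ici (0:ℝ), ((κ (x, a)) ^ (1/q)) ^ q
            = ∫⁻ a in Set.Ici (0:ℝ), κ (x, a) := by
          refine lintegral_congr fun a => ?_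
          rw [← ENNReal.rpow_mul, one_div, inv_mul_cancel₀ hqr'.ne_zero, ENNReal.rpow_one]
        have e3 : ∫⁻ a in Set.Ici (0:ℝ), ((κ (x, a)) ^ (1/r) * F a) ^ r
            = ∫⁻ a in Set.Ici (0:ℝ), κ (x, a) * F a ^ r := by
          refine lintegral_congr fun a => ?_
          rw [ENNReal.mul_rpow_of_nonneg _ _ (le_of_lt hr0), ← ENNReal.rpow_mul, one_div,
            inv_mul_cancel₀ (ne_of_gt hr0), ENNReal.rpow_one]
        rw [e1, e2, e3, hrow hx, ENNReal.one_rpow, one_mul] at hhold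
        calc (∫⁻ y in Set.Ici (0:ℝ), κ (x, y) * F y) ^ r
            ≤ ((∫⁻ y in Set.Ici (0:ℝ), κ (x, y) * F y ^ r) ^ (1/r)) ^ r :=
              ENNReal.rpow_le_rpow hhold (le_of_lt hr0)
          _ = ∫⁻ y in Set.Ici (0:ℝ), κ (x, y) * F y ^ r := by
              rw [← ENNReal.rpow_mul, one_div, inv_mul_cancel₀ (ne_of_gt hr0), ENNReal.rpow_one]
    have hFr : AEMeasurable (Function.uncurry fun x y => κ (x, y) * F y ^ r)
        ((volume.restrict (Set.Ici (0:ℝ))).prod (volume.restrict (Set.Ici (0:ℝ)))) := by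
      have h1 : AEMeasurable (fun p : ℝ × ℝ => F p.2)
          ((volume.restrict (Set.Ici (0:ℝ))).prod (volume.restrict (Set.Ici (0:ℝ)))) :=
        hFmeas.comp_quasiMeasurePreserving Measure.quasiMeasurePreserving_snd
      exact (hκmeas.aemeasurable).mul (h1.pow aemeasurable_const)
    have hHmeas : AEMeasurable (fun x => ∫⁻ y in Set.Ici (0:ℝ), κ (x, y) * F y ^ r)
        (volume.restrict (Set.Ici (0:ℝ))) := by
      obtain ⟨g, hg, hge⟩ := hFr
      refine ⟨fun x => ∫⁻ y in Set.Ici (0:ℝ), g (x, y), hg.lintegral_prod_right', ?_⟩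
      filter_upwards [Measure.ae_ae_of_ae_prod hge] with x hx using lintegral_congr_ae hx
    have hswap : ∫⁻ x in Set.Ici (0:ℝ), ∫⁻ y in Set.Ici (0:ℝ), κ (x, y) * F y ^ r
        = ∫⁻ y in Set.Ici (0:ℝ), F y ^ r := by
      have h1 : ∫⁻ x in Set.Ici (0:ℝ), ∫⁻ y in Set.Ici (0:ℝ), κ (x, y) * F y ^ r
          = ∫⁻ y in Set.Ici (0:ℝ), ∫⁻ x in Set.Ici (0:ℝ), κ (x, y) * F y ^ r :=
        MeasureTheory.lintegral_lintegral_swap hFr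
      rw [h1]
      refine lintegral_congr_ae ?_
      filter_upwards [hmem] with y hy
      rw [lintegral_mul_const'' (f := fun x => κ (x, y)) (F y ^ r)
        ((hκmeas.comp measurable_prodMk_right).aemeasurable),
        hcol hy, one_mul]
    have hFrfin : ∫⁻ y in Set.Ici (0:ℝ), F y ^ r ≠ ⊤ := by
      have hsnorm := hf.2
      rw [eLpNorm_eq_lintegral_rpow_enorm_toReal hp0 hptop] at hsnorm
      intro hcon
      have hcon' : (∫⁻ a in Set.Ici (0:ℝ), ‖f a‖ₑ ^ p.toReal) = ⊤ := hcon
      rw [hcon', ENNReal.top_rpow_of_pos (one_div_pos.mpr (hrdef ▸ hr0))] at hsnorm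
      exact lt_irrefl ⊤ hsnorm
    have hfin : ∫⁻ x in Set.Ici (0:ℝ), ∫⁻ y in Set.Ici (0:ℝ), κ (x, y) * F y ^ r ≠ ⊤ := by
      rw [hswap]
      exact hFrfin
    have hae_fin : ∀ᵐ x ∂(volume.restrict (Set.Ici (0:ℝ))),
        (∫⁻ y in Set.Ici (0:ℝ), κ (x, y) * F y ^ r) < ⊤ := ae_lt_top' hHmeas hfin
    constructor
    · filter_upwards [hmem, hae_fin] with x hx hxf
      refine ⟨hslicemeas x hx, ?_⟩
      have hfi : (∫⁻ y in Set.Ici (0:ℝ), (‖K x y * f y‖₊ : ℝ≥0∞)) < ⊤ := by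
        rw [hG x hx]
        by_contra hcon
        push_neg at hcon
        rw [top_le_iff] at hcon
        have hj := hjensen x hx
        rw [hcon, ENNReal.top_rpow_of_pos hr0] at hj
        rw [top_le_iff.mp hj] at hxf
        exact lt_irrefl ⊤ hxf
      exact hfi
    · rw [eLpNorm_eq_lintegral_rpow_enorm_toReal hp0 hptop, eLpNorm_eq_lintegral_rpow_enorm_toReal hp0 hptop]
      refine ENNReal.rpow_le_rpow ?_ (le_of_lt (one_div_pos.mpr (hrdef ▸ hr0)))
      have hfinal : ∫⁻ x in Set.Ici (0:ℝ),
          (‖∫ y in Set.Ici (0:ℝ), K x y * f y‖₊ : ℝ≥0∞) ^ r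
          ≤ ∫⁻ y in Set.Ici (0:ℝ), F y ^ r := by
        rw [← hswap]
        refine lintegral_mono_ae ?_
        filter_upwards [hmem] with x hx
        calc (‖∫ y in Set.Ici (0:ℝ), K x y * f y‖₊ : ℝ≥0∞) ^ r
            ≤ (∫⁻ y in Set.Ici (0:ℝ), (‖K x y * f y‖₊ : ℝ≥0∞)) ^ r :=
              ENNReal.rpow_le_rpow (enorm_integral_le_lintegral_enorm _) (le_of_lt hr0)
          _ = (∫⁻ y in Set.Ici (0:ℝ), κ (x, y) * F y) ^ r := by rw [hG x hx]
          _ ≤ ∫⁻ y in Set.Ici (0:ℝ), κ (x, y) * F y ^ r := hjensen x hx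
      exact hfinal
end
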